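/- arXiv:2201.08462 — 5 statements merged into one kernel-verified Lean document; each statement's English description precedes it below -/
import Mathlib

section
/- Let $f : [a,b] \to \mathbb{R}$ be $\lambda$-Hölder continuous and $g : [a,b] \to \mathbb{R}$ be $\mu$-Hölder continuous with $\lambda + \mu > 1$. Then there exists a constant $c_{\lambda,\mu}$ depending only on $\lambda$ and $\mu$ such that $\left| \int_a^b (f(s) - f(a))\, dg(s) \right| \le c_{\lambda,\mu} \|f\|_{\lambda;[a,b]} \|g\|_{\mu;[a,b]} (b-a)^{\lambda+\mu}$, where the integral is the Young (Riemann–Stieltjes) integral. -/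
open Filter

/-- `f` is `l`-Hölder continuous on `[a,b]` with constant `C`. -/
def HolderOnI (f : ℝ → ℝ) (l a b C : ℝ) : Prop :=
  ∀ s ∈ Set.Icc a b, ∀ t ∈ Set.Icc a b, |f t - f s| ≤ C * |t - s| ^ l

/-- `I` is the Young (Riemann–Stieltjes) integral `∫_a^b f dg`, defined as the limit of
left Riemann–Stieltjes sums along uniform partitions. -/
def IsRSIntegral (f g : ℝ → ℝ) (a b I : ℝ) : Prop :=
  Tendsto (fun n : ℕ => ∑ k ∈ Finset.range n,
      f (a + (k : ℝ) * (b - a) / n) *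
        (g (a + ((k : ℝ) + 1) * (b - a) / n) - g (a + (k : ℝ) * (b - a) / n)))
    atTop (nhds I)

private lemma sum_two_mul (F : ℕ → ℝ) (n : ℕ) :
    ∑ j ∈ Finset.range (2 * n), F j
      = ∑ k ∈ Finset.range n, (F (2 * k) + F (2 * k + 1)) := by
  induction n with
  | zero => simp
  | succ n ih =>
    rw [Finset.sum_range_succ, ← ih, Nat.mul_succ,
      show 2 * n + 2 = (2 * n + 1) + 1 from rfl,
      Finset.sum_range_succ, Finset.sum_range_succ]
    ring

/-- Young's inequality for the Young integral: for `f` λ-Hölder and `g` μ-Hölder with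
`λ + μ > 1`, `|∫_a^b (f(s) - f(a)) dg(s)| ≤ c_{λ,μ} ‖f‖_λ ‖g‖_μ (b-a)^{λ+μ}`. -/
theorem young_inequality :
    ∀ lam mu : ℝ, 0 < lam → lam ≤ 1 → 0 < mu → mu ≤ 1 → 1 < lam + mu →
    ∃ c : ℝ, 0 < c ∧ ∀ (a b : ℝ) (f g : ℝ → ℝ) (Cf Cg I : ℝ), a ≤ b →
      0 ≤ Cf → 0 ≤ Cg →
      HolderOnI f lam a b Cf → HolderOnI g mu a b Cg →
      IsRSIntegral (fun s => f s - f a) g a b I →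
      |I| ≤ c * Cf * Cg * (b - a) ^ (lam + mu) := by
  intro lam mu hlam hlam1 hmu hmu1 hlm
  set s : ℝ := lam + mu with hs
  have hspos : 0 < s := by linarith
  set θ : ℝ := (2 : ℝ) ^ (1 - s) with hθ
  have hθpos : 0 < θ := Real.rpow_pos_of_pos two_pos _
  have hθlt : θ < 1 := Real.rpow_lt_one_of_one_lt_of_neg one_lt_two (by linarith)
  refine ⟨1 / (1 - θ), div_pos one_pos (by linarith), ?_⟩
  intro a b f g Cf Cg I hab hCf hCg hf hg hI
  have hba : 0 ≤ b - a := sub_nonneg.2 hab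
  have hD : 0 ≤ (b - a) ^ s := Real.rpow_nonneg hba _
  set x : ℕ → ℕ → ℝ := fun n k => a + (k : ℝ) * (b - a) / n with hx
  set S : ℕ → ℝ := fun n => ∑ k ∈ Finset.range n,
      (f (x n k) - f a) * (g (x n (k + 1)) - g (x n k)) with hS
  -- grid points lie in `[a, b]`
  have hmem : ∀ n k : ℕ, k ≤ n → x n k ∈ Set.Icc a b := by
    intro n k hk
    rcases Nat.eq_zero_or_pos n with h0 | hn
    · subst h0
      simp [hx, hab]
    · have hn' : (0 : ℝ) < n := by exact_mod_cast hn
      have hkn : (k : ℝ) ≤ n := by exact_mod_cast hk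
      constructor
      · have : 0 ≤ (k : ℝ) * (b - a) / n := by positivity
        simp only [hx]; linarith
      · have h1 : (k : ℝ) * (b - a) / n ≤ b - a := by
          rw [div_le_iff₀ hn']
          nlinarith
        simp only [hx]; linarith
  have hcancel : ∀ n k : ℕ, x (2 * n) (2 * k) = x n k := by
    intro n k
    simp only [hx]
    push_cast
    rw [mul_assoc, mul_div_mul_left _ _ (two_ne_zero)]
  have hcancel2 : ∀ n k : ℕ, x (2 * n) (2 * k + 2) = x n (k + 1) := by
    intro n k
    have : 2 * k + 2 = 2 * (k + 1) := by ring
    rw [this, hcancel]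
  have hstep : ∀ n k : ℕ, x n (k + 1) - x n k = (b - a) / n := by
    intro n k
    simp only [hx]
    push_cast
    rw [show a + ((k : ℝ) + 1) * (b - a) / n - (a + (k : ℝ) * (b - a) / n)
        = (((k : ℝ) + 1) * (b - a) - (k : ℝ) * (b - a)) / n by rw [sub_div]; ring]
    congr 1; ring
  -- doubling identity
  have hdbl : ∀ n : ℕ, S (2 * n) = S n + ∑ k ∈ Finset.range n,
      (f (x (2 * n) (2 * k + 1)) - f (x n k)) *
        (g (x n (k + 1)) - g (x (2 * n) (2 * k + 1))) := by
    intro n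
    simp only [hS]
    rw [sum_two_mul (fun j => (f (x (2 * n) j) - f a) *
      (g (x (2 * n) (j + 1)) - g (x (2 * n) j))) n, ← Finset.sum_add_distrib]
    refine Finset.sum_congr rfl fun k _ => ?_
    have e1 := hcancel n k
    have e2 := hcancel2 n k
    rw [show 2 * k + 1 + 1 = 2 * k + 2 from rfl, e1, e2]
    ring
  -- bound on the increment
  have hEbound : ∀ n : ℕ, |S (2 * n) - S n|
      ≤ (n : ℝ) * (Cf * Cg * ((b - a) / (2 * (n : ℝ))) ^ s) := by
    intro n
    rw [hdbl n, add_sub_cancel_left]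
    set h : ℝ := (b - a) / (2 * (n : ℝ)) with hh
    have hhnn : 0 ≤ h := by positivity
    calc |∑ k ∈ Finset.range n, (f (x (2 * n) (2 * k + 1)) - f (x n k)) *
            (g (x n (k + 1)) - g (x (2 * n) (2 * k + 1)))|
        ≤ ∑ k ∈ Finset.range n, |(f (x (2 * n) (2 * k + 1)) - f (x n k)) *
            (g (x n (k + 1)) - g (x (2 * n) (2 * k + 1)))| :=
          Finset.abs_sum_le_sum_abs _ _
      _ ≤ ∑ _k ∈ Finset.range n, Cf * Cg * h ^ s := by
          refine Finset.sum_le_sum fun k hk => ?_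
          have hkn : k < n := Finset.mem_range.1 hk
          have hm1 : x n k ∈ Set.Icc a b := hmem n k hkn.le
          have hm2 : x (2 * n) (2 * k + 1) ∈ Set.Icc a b :=
            hmem (2 * n) (2 * k + 1) (by omega)
          have hm3 : x n (k + 1) ∈ Set.Icc a b := hmem n (k + 1) hkn
          have hd1 : x (2 * n) (2 * k + 1) - x n k = h := by
            have := hstep (2 * n) (2 * k)
            rw [hcancel n k] at this
            rw [this, hh]; push_cast; ring_nf
          have hd2 : x n (k + 1) - x (2 * n) (2 * k + 1) = h := by
            have := hstep (2 * n) (2 * k + 1)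
            rw [show 2 * k + 1 + 1 = 2 * k + 2 from rfl, hcancel2 n k] at this
            rw [this, hh]; push_cast; ring_nf
          have hfb : |f (x (2 * n) (2 * k + 1)) - f (x n k)| ≤ Cf * h ^ lam := by
            have := hf (x n k) hm1 (x (2 * n) (2 * k + 1)) hm2
            rwa [hd1, abs_of_nonneg hhnn] at this
          have hgb : |g (x n (k + 1)) - g (x (2 * n) (2 * k + 1))| ≤ Cg * h ^ mu := by
            have := hg (x (2 * n) (2 * k + 1)) hm2 (x n (k + 1)) hm3
            rwa [hd2, abs_of_nonneg hhnn] at this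
          rw [abs_mul]
          calc |f (x (2 * n) (2 * k + 1)) - f (x n k)| *
                |g (x n (k + 1)) - g (x (2 * n) (2 * k + 1))|
              ≤ (Cf * h ^ lam) * (Cg * h ^ mu) :=
                mul_le_mul hfb hgb (abs_nonneg _)
                  (by positivity)
            _ = Cf * Cg * h ^ s := by
                rw [hs, Real.rpow_add' hhnn (by linarith : lam + mu ≠ 0)]; ring
      _ = (n : ℝ) * (Cf * Cg * h ^ s) := by
          rw [Finset.sum_const, Finset.card_range, nsmul_eq_mul]
  -- the crucial geometric estimate for `n = 2^m`
  have hterm : ∀ m : ℕ, ((2 ^ m : ℕ) : ℝ) *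
      (Cf * Cg * ((b - a) / (2 * ((2 ^ m : ℕ) : ℝ))) ^ s)
      ≤ Cf * Cg * (b - a) ^ s * θ ^ m := by
    intro m
    have h2m : (2 : ℝ) * ((2 ^ m : ℕ) : ℝ) = (2 : ℝ) ^ (m + 1) := by
      push_cast; ring
    rw [h2m, Real.div_rpow hba (by positivity)]
    have hkey : ((2 : ℝ) ^ m) / ((2 : ℝ) ^ (m + 1)) ^ s ≤ θ ^ m := by
      rw [← Real.rpow_natCast (2 : ℝ) m, ← Real.rpow_natCast (2 : ℝ) (m + 1),
        ← Real.rpow_mul (by norm_num : (0:ℝ) ≤ 2),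
        ← Real.rpow_sub two_pos, hθ,
        ← Real.rpow_natCast ((2:ℝ) ^ (1 - s)) m,
        ← Real.rpow_mul (by norm_num : (0:ℝ) ≤ 2)]
      rw [Real.rpow_le_rpow_left_iff one_lt_two]
      push_cast
      nlinarith [Nat.cast_nonneg (α := ℝ) m]
    calc ((2 ^ m : ℕ) : ℝ) * (Cf * Cg * ((b - a) ^ s / ((2:ℝ) ^ (m + 1)) ^ s))
        = (Cf * Cg * (b - a) ^ s) * ((2 : ℝ) ^ m / ((2:ℝ) ^ (m + 1)) ^ s) := by
          push_cast; ring
      _ ≤ (Cf * Cg * (b - a) ^ s) * θ ^ m := by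
          refine mul_le_mul_of_nonneg_left hkey (by positivity)
      _ = Cf * Cg * (b - a) ^ s * θ ^ m := by ring
  -- main bound along the dyadic subsequence
  have key : ∀ m : ℕ, |S (2 ^ m)|
      ≤ Cf * Cg * (b - a) ^ s * ∑ j ∈ Finset.range m, θ ^ j := by
    intro m
    induction m with
    | zero =>
      have h1 : S 1 = 0 := by simp [hS, hx]
      simp [h1]
    | succ m ih =>
      have h2 : (2 : ℕ) ^ (m + 1) = 2 * 2 ^ m := by ring
      have htri : |S (2 ^ (m + 1))| ≤ |S (2 ^ m)| + |S (2 * 2 ^ m) - S (2 ^ m)| := by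
        rw [h2]
        calc |S (2 * 2 ^ m)| = |S (2 ^ m) + (S (2 * 2 ^ m) - S (2 ^ m))| := by ring_nf
          _ ≤ |S (2 ^ m)| + |S (2 * 2 ^ m) - S (2 ^ m)| := abs_add_le _ _
      have hE := (hEbound (2 ^ m)).trans (hterm m)
      rw [Finset.sum_range_succ, mul_add]
      linarith
  -- geometric series bound
  have hgeo : ∀ m : ℕ, ∑ j ∈ Finset.range m, θ ^ j ≤ 1 / (1 - θ) := by
    intro m
    rw [geom_sum_eq (ne_of_lt hθlt)]
    rw [show (θ ^ m - 1) / (θ - 1) = (1 - θ ^ m) / (1 - θ) by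
      rw [div_eq_div_iff (by linarith) (by linarith)]; ring]
    have : 0 ≤ θ ^ m := le_of_lt (pow_pos hθpos m)
    gcongr
    · linarith
  have hS2 : ∀ m : ℕ, |S (2 ^ m)| ≤ 1 / (1 - θ) * Cf * Cg * (b - a) ^ s := by
    intro m
    refine (key m).trans ?_
    calc Cf * Cg * (b - a) ^ s * ∑ j ∈ Finset.range m, θ ^ j
        ≤ Cf * Cg * (b - a) ^ s * (1 / (1 - θ)) :=
          mul_le_mul_of_nonneg_left (hgeo m) (by positivity)
      _ = 1 / (1 - θ) * Cf * Cg * (b - a) ^ s := by ring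
  -- identify the limit
  have hI' : Tendsto S atTop (nhds I) := by
    have hfun : S = fun n : ℕ => ∑ k ∈ Finset.range n,
        (fun s => f s - f a) (a + (k : ℝ) * (b - a) / n) *
          (g (a + ((k : ℝ) + 1) * (b - a) / n) - g (a + (k : ℝ) * (b - a) / n)) := by
      funext n
      simp only [hS, hx]
      refine Finset.sum_congr rfl fun k _ => ?_
      push_cast
      ring_nf
    rw [hfun]
    exact hI
  have hI2 : Tendsto (fun m : ℕ => S (2 ^ m)) atTop (nhds I) :=
    hI'.comp (tendsto_pow_atTop_atTop_of_one_lt one_lt_two)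
  exact le_of_tendsto hI2.abs (Eventually.of_forall hS2)
end

section
/- Vanishing of the remainder: under the Lipschitz and linear growth conditions on $b$, the remainder $\sup_{\theta \in \Theta} |R_{n,\varepsilon}(\theta)| \to 0$ as $n \to \infty$ and $\varepsilon \downarrow 0$ (pathwise, for each continuous Hölder path $W^H$). More precisely, for any $\lambda \in (0,H)$ there is a random constant $C$ (depending on $\sup_t |W_t^H|$, $\|W^H\|_{\lambda}$, $\sup_t |x_t^{\theta_0}|$) such that $\sup_\theta |R_{n,\varepsilon}(\theta)| \le C (n^{-1} + \varepsilon n^{-\lambda})$. -/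
set_option maxHeartbeats 1000000


open Filter

/-- Vanishing of the remainder term `R_{n,ε}` of the contrast decomposition:
`sup_θ |R_{n,ε}(θ)| ≤ C (n⁻¹ + ε n^{-λ})`, hence it tends to `0` pathwise. -/
theorem remainder_vanishes {Θ : Type*} (H lam c x0 : ℝ) (hH : H ∈ Set.Ioo (0:ℝ) 1)
    (hlam : lam ∈ Set.Ioo (0:ℝ) H) (hc : 0 < c)
    (b : ℝ → Θ → ℝ) (W : ℝ → ℝ) (X : ℝ → ℝ → ℝ) (θ0 : Θ) (CW MW : ℝ)
    (hbL : ∀ (θ : Θ) (y z : ℝ), |b y θ - b z θ| ≤ c * |y - z|)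
    (hbG : ∀ (θ : Θ) (y : ℝ), |b y θ| ≤ c * (1 + |y|))
    (hWH : ∀ s ∈ Set.Icc (0:ℝ) 1, ∀ t ∈ Set.Icc (0:ℝ) 1, |W t - W s| ≤ CW * |t - s| ^ lam)
    (hMW : ∀ t ∈ Set.Icc (0:ℝ) 1, |W t| ≤ MW)
    (hXc : ∀ ε, ContinuousOn (X ε) (Set.Icc 0 1))
    (hX : ∀ ε ∈ Set.Ioc (0:ℝ) 1, ∀ t ∈ Set.Icc (0:ℝ) 1,
      X ε t = x0 + (∫ s in (0:ℝ)..t, b (X ε s) θ0) + ε * W t) :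
    ∃ C > (0:ℝ),
      (∀ n : ℕ, 1 ≤ n → ∀ ε ∈ Set.Ioc (0:ℝ) 1, ∀ θ : Θ,
        |(-2) * ∑ k ∈ Finset.range n,
            (b (X ε ((k : ℝ) / n)) θ - b (X ε ((k : ℝ) / n)) θ0)
              * ∫ s in ((k : ℝ) / n)..(((k : ℝ) + 1) / n),
                  (b (X ε s) θ0 - b (X ε ((k : ℝ) / n)) θ0)|
          ≤ C * ((n : ℝ)⁻¹ + ε * (n : ℝ) ^ (-lam))) ∧
      ∀ (ns : ℕ → ℕ) (es : ℕ → ℝ), Tendsto ns atTop atTop →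
        Tendsto es atTop (nhdsWithin 0 (Set.Ioi 0)) → (∀ j, es j ∈ Set.Ioc (0:ℝ) 1) →
        Tendsto (fun j => sSup {y | ∃ θ : Θ, y =
            |(-2) * ∑ k ∈ Finset.range (ns j),
              (b (X (es j) ((k : ℝ) / (ns j))) θ - b (X (es j) ((k : ℝ) / (ns j))) θ0)
                * ∫ s in ((k : ℝ) / (ns j))..(((k : ℝ) + 1) / (ns j)),
                    (b (X (es j) s) θ0 - b (X (es j) ((k : ℝ) / (ns j))) θ0)|})
          atTop (nhds 0) := by
  classical
  obtain ⟨hl0, hlH⟩ := hlam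
  have hMW0 : 0 ≤ MW := le_trans (abs_nonneg _) (hMW 0 (by norm_num))
  have hCW0 : 0 ≤ CW := by
    have h := hWH 0 (by norm_num) 1 (by norm_num)
    have h2 : (0:ℝ) ≤ CW * |(1:ℝ) - 0| ^ lam := le_trans (abs_nonneg _) h
    simpa using h2
  set A : ℝ := |x0| + MW + c with hA
  have hA0 : 0 < A := by positivity
  set M : ℝ := A * Real.exp c with hMdef
  have hM0 : 0 < M := by positivity
  -- continuity of b in x
  have hbc : ∀ θ : Θ, Continuous fun y => b y θ := by
    intro θ
    have : LipschitzWith c.toNNReal fun y => b y θ := by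
      apply LipschitzWith.of_dist_le_mul
      intro y z
      rw [Real.dist_eq, Real.dist_eq, Real.coe_toNNReal c hc.le]
      exact hbL θ y z
    exact this.continuous
  -- interval integrability of b ∘ X on subintervals of [0,1]
  have hXint : ∀ ε, ∀ s ∈ Set.Icc (0:ℝ) 1, ∀ t ∈ Set.Icc (0:ℝ) 1,
      IntervalIntegrable (fun r => b (X ε r) θ0) MeasureTheory.volume s t := by
    intro ε s hs t ht
    apply ContinuousOn.intervalIntegrable
    apply ((hbc θ0).comp_continuousOn (hXc ε)).mono
    exact Set.uIcc_subset_Icc hs ht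
  -- uniform bound on X via Gronwall
  have hXb : ∀ ε ∈ Set.Ioc (0:ℝ) 1, ∀ t ∈ Set.Icc (0:ℝ) 1, |X ε t| ≤ M := by
    rintro ε ⟨hε0, hε1⟩
    set π : ℝ → ℝ := fun s => max 0 (min s 1) with hπ
    have hπmem : ∀ s, π s ∈ Set.Icc (0:ℝ) 1 := fun s =>
      ⟨le_max_left _ _, max_le (by norm_num) (min_le_right _ _)⟩
    have hπid : ∀ s ∈ Set.Icc (0:ℝ) 1, π s = s := by
      intro s hs
      simp only [hπ, min_eq_left hs.2, max_eq_right hs.1]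
    have hYc : Continuous fun s => X ε (π s) :=
      (hXc ε).comp_continuous (continuous_const.max (continuous_id.min continuous_const)) hπmem
    set u : ℝ → ℝ := fun s => |X ε (π s)| with hu
    have huc : Continuous u := hYc.abs
    have hunn : ∀ s, 0 ≤ u s := fun s => abs_nonneg _
    set G : ℝ → ℝ := fun t => ∫ s in (0:ℝ)..t, u s with hG
    have hGd : ∀ t, HasDerivAt G (u t) t := fun t =>
      (huc.integral_hasStrictDerivAt 0 t).hasDerivAt
    have hGc : Continuous G :=
      continuous_iff_continuousAt.mpr fun t => (hGd t).continuousAt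
    have hGnn : ∀ t ∈ Set.Icc (0:ℝ) 1, 0 ≤ G t := by
      intro t ht
      exact intervalIntegral.integral_nonneg ht.1 fun s _ => hunn s
    -- the key integral inequality
    have key : ∀ t ∈ Set.Icc (0:ℝ) 1, u t ≤ A + c * G t := by
      intro t ht
      have hut : u t = |X ε t| := by rw [hu]; simp only [hπid t ht]
      rw [hut, hX ε ⟨hε0, hε1⟩ t ht]
      have hcongr : (∫ s in (0:ℝ)..t, b (X ε s) θ0) = ∫ s in (0:ℝ)..t, b (X ε (π s)) θ0 := by
        apply intervalIntegral.integral_congr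
        intro s hs
        rw [Set.uIcc_of_le ht.1] at hs
        show b (X ε s) θ0 = b (X ε (π s)) θ0
        rw [hπid s ⟨hs.1, le_trans hs.2 ht.2⟩]
      have hint1 : IntervalIntegrable (fun s => b (X ε (π s)) θ0) MeasureTheory.volume 0 t :=
        (((hbc θ0).comp hYc).intervalIntegrable 0 t)
      have habs : |∫ s in (0:ℝ)..t, b (X ε (π s)) θ0| ≤ ∫ s in (0:ℝ)..t, (c + c * u s) := by
        calc |∫ s in (0:ℝ)..t, b (X ε (π s)) θ0|
            ≤ ∫ s in (0:ℝ)..t, |b (X ε (π s)) θ0| :=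
              intervalIntegral.abs_integral_le_integral_abs ht.1
          _ ≤ ∫ s in (0:ℝ)..t, (c + c * u s) := by
              apply intervalIntegral.integral_mono_on ht.1 hint1.abs
                ((continuous_const.add (continuous_const.mul huc)).intervalIntegrable 0 t)
              intro s _
              have := hbG θ0 (X ε (π s))
              calc |b (X ε (π s)) θ0| ≤ c * (1 + |X ε (π s)|) := this
                _ = c + c * u s := by rw [hu]; ring
      have hGval : (∫ s in (0:ℝ)..t, (c + c * u s)) = c * t + c * G t := by
        rw [intervalIntegral.integral_add (f := fun _ => c) (g := fun s => c * u s)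
          (intervalIntegrable_const)
          ((continuous_const.mul huc).intervalIntegrable 0 t),
          intervalIntegral.integral_const, intervalIntegral.integral_const_mul]
        simp [hG]
        ring
      have hW : ε * |W t| ≤ MW :=
        le_trans (mul_le_mul hε1 (hMW t ht) (abs_nonneg _) zero_le_one) (by simp)
      calc |x0 + (∫ s in (0:ℝ)..t, b (X ε s) θ0) + ε * W t|
          ≤ |x0| + |∫ s in (0:ℝ)..t, b (X ε s) θ0| + |ε * W t| := by
            exact le_trans (abs_add_le _ _) (add_le_add_left (abs_add_le _ _) _)
        _ ≤ |x0| + (c * t + c * G t) + MW := by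
            apply add_le_add
            apply add_le_add_right
            · rw [hcongr]; exact le_trans habs (le_of_eq hGval)
            · rw [abs_mul, abs_of_pos hε0]; exact hW
        _ ≤ A + c * G t := by
            rw [hA]
            have : c * t ≤ c := by
              calc c * t ≤ c * 1 := mul_le_mul_of_nonneg_left ht.2 hc.le
                _ = c := mul_one c
            linarith
    -- Gronwall
    have hGb : ∀ t ∈ Set.Icc (0:ℝ) 1, ‖G t‖ ≤ gronwallBound 0 c A (t - 0) := by
      apply norm_le_gronwallBound_of_norm_deriv_right_le hGc.continuousOn
        (fun x _ => (hGd x).hasDerivWithinAt)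
      · simp [hG]
      · intro x hx
        have hx' : x ∈ Set.Icc (0:ℝ) 1 := Set.Ico_subset_Icc_self hx
        rw [Real.norm_eq_abs, Real.norm_eq_abs, abs_of_nonneg (hunn x),
          abs_of_nonneg (hGnn x hx')]
        have := key x hx'
        linarith
    intro t ht
    have h1 : u t = |X ε t| := by rw [hu]; simp only [hπid t ht]
    have h2 : ‖G t‖ = G t := by rw [Real.norm_eq_abs, abs_of_nonneg (hGnn t ht)]
    have h3 : gronwallBound 0 c A (t - 0) = A / c * (Real.exp (c * t) - 1) := by
      rw [gronwallBound_of_K_ne_0 hc.ne']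
      simp
    have h4 := hGb t ht
    rw [h2, h3] at h4
    have h5 : u t ≤ A + c * (A / c * (Real.exp (c * t) - 1)) :=
      le_trans (key t ht) (by nlinarith)
    have h6 : c * (A / c * (Real.exp (c * t) - 1)) = A * (Real.exp (c * t) - 1) := by
      field_simp
    rw [h6] at h5
    have h7 : Real.exp (c * t) ≤ Real.exp c := by
      apply Real.exp_le_exp.mpr
      calc c * t ≤ c * 1 := mul_le_mul_of_nonneg_left ht.2 hc.le
        _ = c := mul_one c
    rw [← h1]
    calc u t ≤ A * (Real.exp (c * t) - 1) + A := by linarith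
      _ = A * Real.exp (c * t) := by ring
      _ ≤ A * Real.exp c := mul_le_mul_of_nonneg_left h7 hA0.le
  -- increment bound
  have hincr : ∀ ε ∈ Set.Ioc (0:ℝ) 1, ∀ s ∈ Set.Icc (0:ℝ) 1, ∀ t ∈ Set.Icc (0:ℝ) 1, s ≤ t →
      |X ε t - X ε s| ≤ c * (1 + M) * (t - s) + ε * CW * (t - s) ^ lam := by
    rintro ε hε s hs t ht hst
    have h01 : (0:ℝ) ∈ Set.Icc (0:ℝ) 1 := by norm_num
    have hsub : X ε t - X ε s = (∫ r in s..t, b (X ε r) θ0) + ε * (W t - W s) := by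
      rw [hX ε hε t ht, hX ε hε s hs]
      have := intervalIntegral.integral_interval_sub_left
        (hXint ε 0 h01 t ht) (hXint ε 0 h01 s hs)
      rw [← this]
      ring
    rw [hsub]
    have hI : |∫ r in s..t, b (X ε r) θ0| ≤ c * (1 + M) * (t - s) := by
      have hb : ∀ x ∈ Set.uIoc s t, ‖b (X ε x) θ0‖ ≤ c * (1 + M) := by
        intro x hx
        rw [Set.uIoc_of_le hst] at hx
        have hx' : x ∈ Set.Icc (0:ℝ) 1 := ⟨le_trans hs.1 hx.1.le, le_trans hx.2 ht.2⟩
        rw [Real.norm_eq_abs]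
        calc |b (X ε x) θ0| ≤ c * (1 + |X ε x|) := hbG θ0 _
          _ ≤ c * (1 + M) := by
              apply mul_le_mul_of_nonneg_left _ hc.le
              linarith [hXb ε hε x hx']
      have := intervalIntegral.norm_integral_le_of_norm_le_const hb
      rw [Real.norm_eq_abs] at this
      calc |∫ r in s..t, b (X ε r) θ0| ≤ c * (1 + M) * |t - s| := this
        _ = c * (1 + M) * (t - s) := by rw [abs_of_nonneg (by linarith)]
    have hWp : ε * |W t - W s| ≤ ε * (CW * (t - s) ^ lam) := by
      apply mul_le_mul_of_nonneg_left _ hε.1.le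
      have := hWH s hs t ht
      rwa [abs_of_nonneg (by linarith : (0:ℝ) ≤ t - s)] at this
    calc |(∫ r in s..t, b (X ε r) θ0) + ε * (W t - W s)|
        ≤ |∫ r in s..t, b (X ε r) θ0| + |ε * (W t - W s)| := abs_add_le _ _
      _ ≤ c * (1 + M) * (t - s) + ε * CW * (t - s) ^ lam := by
          rw [abs_mul, abs_of_pos hε.1]
          rw [← mul_assoc] at hWp
          exact add_le_add hI hWp
  -- the constant
  set B : ℝ := c * (1 + M) with hB
  have hB0 : 0 < B := by positivity
  set C : ℝ := 4 * c * B * (B + CW) + 1 with hCdef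
  have hC0 : 0 < C := by positivity
  -- main bound
  have main : ∀ n : ℕ, 1 ≤ n → ∀ ε ∈ Set.Ioc (0:ℝ) 1, ∀ θ : Θ,
      |(-2) * ∑ k ∈ Finset.range n,
          (b (X ε ((k : ℝ) / n)) θ - b (X ε ((k : ℝ) / n)) θ0)
            * ∫ s in ((k : ℝ) / n)..(((k : ℝ) + 1) / n),
                (b (X ε s) θ0 - b (X ε ((k : ℝ) / n)) θ0)|
        ≤ C * ((n : ℝ)⁻¹ + ε * (n : ℝ) ^ (-lam)) := by
    intro n hn ε hε θ
    have hn0 : (0:ℝ) < n := by exact_mod_cast hn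
    have hq : ((n : ℝ))⁻¹ ^ lam = (n : ℝ) ^ (-lam) := by
      rw [Real.rpow_neg (le_of_lt hn0), ← Real.inv_rpow (le_of_lt hn0)]
    set q : ℝ := (n : ℝ) ^ (-lam) with hqdef
    have hq0 : 0 ≤ q := Real.rpow_nonneg (le_of_lt hn0) _
    set D : ℝ := c * (B * (n : ℝ)⁻¹ + ε * CW * q) with hD
    have hD0 : 0 ≤ D := by
      have h1 : 0 ≤ ε * CW * q := mul_nonneg (mul_nonneg hε.1.le hCW0) hq0
      have h2 : 0 ≤ B * (n : ℝ)⁻¹ := by positivity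
      rw [hD]
      exact mul_nonneg hc.le (by linarith)
    have hterm : ∀ k ∈ Finset.range n,
        |(b (X ε ((k : ℝ) / n)) θ - b (X ε ((k : ℝ) / n)) θ0)
          * ∫ s in ((k : ℝ) / n)..(((k : ℝ) + 1) / n),
              (b (X ε s) θ0 - b (X ε ((k : ℝ) / n)) θ0)| ≤ 2 * B * (D * (n : ℝ)⁻¹) := by
      intro k hk
      have hk' : (k : ℝ) + 1 ≤ n := by
        have := Finset.mem_range.mp hk
        exact_mod_cast Nat.succ_le_of_lt this
      have htk : (k : ℝ) / n ∈ Set.Icc (0:ℝ) 1 := by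
        constructor
        · positivity
        · rw [div_le_one hn0]; linarith
      have htk1 : ((k : ℝ) + 1) / n ∈ Set.Icc (0:ℝ) 1 := by
        constructor
        · positivity
        · rw [div_le_one hn0]; linarith
      have hle : (k : ℝ) / n ≤ ((k : ℝ) + 1) / n := by
        gcongr
        linarith
      have hlen : ((k : ℝ) + 1) / n - (k : ℝ) / n = (n : ℝ)⁻¹ := by
        field_simp
        ring
      rw [abs_mul]
      have hf1 : |b (X ε ((k : ℝ) / n)) θ - b (X ε ((k : ℝ) / n)) θ0| ≤ 2 * B := by
        have hXk := hXb ε hε _ htk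
        calc |b (X ε ((k : ℝ) / n)) θ - b (X ε ((k : ℝ) / n)) θ0|
            ≤ |b (X ε ((k : ℝ) / n)) θ| + |b (X ε ((k : ℝ) / n)) θ0| := abs_sub _ _
          _ ≤ c * (1 + |X ε ((k : ℝ) / n)|) + c * (1 + |X ε ((k : ℝ) / n)|) :=
              add_le_add (hbG θ _) (hbG θ0 _)
          _ ≤ c * (1 + M) + c * (1 + M) := by
              have : c * (1 + |X ε ((k : ℝ) / n)|) ≤ c * (1 + M) := by
                apply mul_le_mul_of_nonneg_left _ hc.le
                linarith
              linarith
          _ = 2 * B := by rw [hB]; ring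
      have hf2 : |∫ s in ((k : ℝ) / n)..(((k : ℝ) + 1) / n),
          (b (X ε s) θ0 - b (X ε ((k : ℝ) / n)) θ0)| ≤ D * (n : ℝ)⁻¹ := by
        have hbnd : ∀ x ∈ Set.uIoc ((k : ℝ) / n) (((k : ℝ) + 1) / n),
            ‖b (X ε x) θ0 - b (X ε ((k : ℝ) / n)) θ0‖ ≤ D := by
          intro x hx
          rw [Set.uIoc_of_le hle] at hx
          have hx1 : x ∈ Set.Icc (0:ℝ) 1 := ⟨le_trans htk.1 hx.1.le, le_trans hx.2 htk1.2⟩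
          have hxk : x - (k : ℝ) / n ≤ (n : ℝ)⁻¹ := by linarith [hx.2]
          have hxk0 : 0 ≤ x - (k : ℝ) / n := by linarith [hx.1.le]
          have hinc := hincr ε hε ((k : ℝ) / n) htk x hx1 hx.1.le
          rw [Real.norm_eq_abs]
          calc |b (X ε x) θ0 - b (X ε ((k : ℝ) / n)) θ0|
              ≤ c * |X ε x - X ε ((k : ℝ) / n)| := hbL θ0 _ _
            _ ≤ c * (c * (1 + M) * (x - (k : ℝ) / n) + ε * CW * (x - (k : ℝ) / n) ^ lam) :=
                mul_le_mul_of_nonneg_left hinc hc.le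
            _ ≤ D := by
                rw [hD]
                apply mul_le_mul_of_nonneg_left _ hc.le
                have h1 : c * (1 + M) * (x - (k : ℝ) / n) ≤ B * (n : ℝ)⁻¹ := by
                  rw [hB]
                  exact mul_le_mul_of_nonneg_left hxk (by positivity)
                have h2 : (x - (k : ℝ) / n) ^ lam ≤ ((n : ℝ)⁻¹) ^ lam :=
                  Real.rpow_le_rpow hxk0 hxk hl0.le
                have h3 : ε * CW * (x - (k : ℝ) / n) ^ lam ≤ ε * CW * q := by
                  rw [← hq]
                  exact mul_le_mul_of_nonneg_left h2 (mul_nonneg hε.1.le hCW0)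
                linarith
        have hni := intervalIntegral.norm_integral_le_of_norm_le_const hbnd
        rw [Real.norm_eq_abs] at hni
        have hlen' : |((k : ℝ) + 1) / n - (k : ℝ) / n| = (n : ℝ)⁻¹ := by
          rw [abs_of_nonneg (by linarith), hlen]
        calc |∫ s in ((k : ℝ) / n)..(((k : ℝ) + 1) / n),
              (b (X ε s) θ0 - b (X ε ((k : ℝ) / n)) θ0)|
            ≤ D * |((k : ℝ) + 1) / n - (k : ℝ) / n| := hni
          _ = D * (n : ℝ)⁻¹ := by rw [hlen']
      exact mul_le_mul hf1 hf2 (abs_nonneg _) (by positivity)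
    have hsum : |∑ k ∈ Finset.range n,
        (b (X ε ((k : ℝ) / n)) θ - b (X ε ((k : ℝ) / n)) θ0)
          * ∫ s in ((k : ℝ) / n)..(((k : ℝ) + 1) / n),
              (b (X ε s) θ0 - b (X ε ((k : ℝ) / n)) θ0)| ≤ (n : ℝ) * (2 * B * (D * (n : ℝ)⁻¹)) := by
      calc |∑ k ∈ Finset.range n,
          (b (X ε ((k : ℝ) / n)) θ - b (X ε ((k : ℝ) / n)) θ0)
            * ∫ s in ((k : ℝ) / n)..(((k : ℝ) + 1) / n),
                (b (X ε s) θ0 - b (X ε ((k : ℝ) / n)) θ0)|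
          ≤ ∑ k ∈ Finset.range n,
            |(b (X ε ((k : ℝ) / n)) θ - b (X ε ((k : ℝ) / n)) θ0)
              * ∫ s in ((k : ℝ) / n)..(((k : ℝ) + 1) / n),
                  (b (X ε s) θ0 - b (X ε ((k : ℝ) / n)) θ0)| := Finset.abs_sum_le_sum_abs _ _
        _ ≤ ∑ _k ∈ Finset.range n, 2 * B * (D * (n : ℝ)⁻¹) := Finset.sum_le_sum hterm
        _ = (n : ℝ) * (2 * B * (D * (n : ℝ)⁻¹)) := by
            rw [Finset.sum_const, Finset.card_range, nsmul_eq_mul]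
    rw [abs_mul]
    have habs2 : |(-2:ℝ)| = 2 := by norm_num
    rw [habs2]
    have hεq : 0 ≤ ε * q := mul_nonneg hε.1.le hq0
    have hninv : (0:ℝ) ≤ (n : ℝ)⁻¹ := by positivity
    have i1 : 4 * c * B * B ≤ C := by rw [hCdef]; nlinarith
    have i2 : 4 * c * B * CW ≤ C := by rw [hCdef]; nlinarith
    have e1 : (n : ℝ) * (2 * B * (D * (n : ℝ)⁻¹))
        = 2 * c * B * B * (n : ℝ)⁻¹ + 2 * c * B * CW * (ε * q) := by
      rw [hD]
      field_simp
    have i3 : 4 * c * B * B * (n : ℝ)⁻¹ ≤ C * (n : ℝ)⁻¹ :=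
      mul_le_mul_of_nonneg_right i1 hninv
    have i4 : 4 * c * B * CW * (ε * q) ≤ C * (ε * q) :=
      mul_le_mul_of_nonneg_right i2 hεq
    have e2 : C * ((n : ℝ)⁻¹ + ε * q) = C * (n : ℝ)⁻¹ + C * (ε * q) := by ring
    rw [e2]
    refine le_trans (mul_le_mul_of_nonneg_left hsum (by norm_num)) ?_
    rw [e1]
    clear_value A M B C D q
    linarith [i3, i4]
  refine ⟨C, hC0, main, ?_⟩
  intro ns es hns hes hesmem
  by_cases hΘ : Nonempty Θ
  · obtain ⟨θ1⟩ := hΘ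
    have hev : ∀ᶠ j in atTop, 1 ≤ ns j := hns.eventually_ge_atTop 1
    apply squeeze_zero' (g := fun j => C * ((ns j : ℝ)⁻¹ + es j))
    · filter_upwards [hev] with j hj
      have hn0 : (0:ℝ) < ns j := by exact_mod_cast hj
      have hbdd : BddAbove {y | ∃ θ : Θ, y =
          |(-2) * ∑ k ∈ Finset.range (ns j),
            (b (X (es j) ((k : ℝ) / (ns j))) θ - b (X (es j) ((k : ℝ) / (ns j))) θ0)
              * ∫ s in ((k : ℝ) / (ns j))..(((k : ℝ) + 1) / (ns j)),
                  (b (X (es j) s) θ0 - b (X (es j) ((k : ℝ) / (ns j))) θ0)|} := by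
        refine ⟨C * ((ns j : ℝ)⁻¹ + es j * (ns j : ℝ) ^ (-lam)), ?_⟩
        rintro y ⟨θ, rfl⟩
        exact main (ns j) hj (es j) (hesmem j) θ
      refine le_csSup hbdd ⟨θ1, rfl⟩ |>.trans' (abs_nonneg _)
    · filter_upwards [hev] with j hj
      have hn0 : (0:ℝ) < ns j := by exact_mod_cast hj
      have hq1 : ((ns j : ℝ)) ^ (-lam) ≤ 1 :=
        Real.rpow_le_one_of_one_le_of_nonpos (by exact_mod_cast hj) (by linarith)
      apply Real.sSup_le
      · rintro y ⟨θ, rfl⟩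
        refine le_trans (main (ns j) hj (es j) (hesmem j) θ) ?_
        apply mul_le_mul_of_nonneg_left _ hC0.le
        apply add_le_add_right
        calc es j * (ns j : ℝ) ^ (-lam) ≤ es j * 1 :=
              mul_le_mul_of_nonneg_left hq1 (hesmem j).1.le
          _ = es j := mul_one _
      · have := (hesmem j).1.le
        positivity
    · have h1 : Tendsto (fun j => ((ns j : ℝ))⁻¹) atTop (nhds 0) :=
        tendsto_inv_atTop_zero.comp (tendsto_natCast_atTop_atTop.comp hns)
      have h2 : Tendsto es atTop (nhds 0) := hes.mono_right nhdsWithin_le_nhds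
      have := (h1.add h2).const_mul C
      simpa using this
  · have hempty : ∀ j, {y | ∃ θ : Θ, y =
        |(-2) * ∑ k ∈ Finset.range (ns j),
          (b (X (es j) ((k : ℝ) / (ns j))) θ - b (X (es j) ((k : ℝ) / (ns j))) θ0)
            * ∫ s in ((k : ℝ) / (ns j))..(((k : ℝ) + 1) / (ns j)),
                (b (X (es j) s) θ0 - b (X (es j) ((k : ℝ) / (ns j))) θ0)|} = (∅ : Set ℝ) := by
      intro j
      apply Set.eq_empty_of_forall_notMem
      rintro y ⟨θ, -⟩
      exact hΘ ⟨θ⟩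
    simp only [hempty, Real.sSup_empty]
    exact tendsto_const_nhds
end

section
/- Deterministic version of Lemma 7 (small-noise Riemann–Stieltjes sum convergence): Let $H \in (0,1)$, let $g : [0,T] \to \mathbb{R}$ be a path with finite $(1/H)$-variation along dyadic partitions in the sense that $\sup_n (\sum_{k=0}^{n-1} |g(t_{k+1}) - g(t_k)|^{1/H})^H =: V < \infty$ (with $t_k = kT/n$), and $\lambda'$-Hölder continuous for some $\lambda' \in (1-\lambda, 1)$ matching $\lambda \in (1-H,1)$ with $\lambda + \lambda' > 1$. Let $f : \mathbb{R} \times \Theta \to \mathbb{R}$ satisfy $\sup_\theta |f(x,\theta) - f(y,\theta)| \le c|x-y|$, let $x : [0,T] \to \mathbb{R}$ be Lipschitz, and let $X^\varepsilon : [0,T] \to \mathbb{R}$ satisfy $\sup_t |X^\varepsilon_t - x_t| \le K\varepsilon$. If $\varepsilon n^{1-H} \to 0$ as $n \to \infty$, $\varepsilon \downarrow 0$, then $\sup_{\theta} \left| \sum_{k=0}^{n-1} f(X^\varepsilon_{t_k},\theta)(g(t_{k+1}) - g(t_k)) - \int_0^T f(x_s,\theta)\,dg(s) \right| \to 0$.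 -/
open Filter

private lemma sum_range_two_mul (a : ℕ → ℝ) (n : ℕ) :
    ∑ j ∈ Finset.range (2 * n), a j
      = ∑ k ∈ Finset.range n, (a (2 * k) + a (2 * k + 1)) := by
  induction n with
  | zero => simp
  | succ n ih =>
    have h : 2 * (n + 1) = (2 * n + 1) + 1 := by ring
    rw [h, Finset.sum_range_succ, Finset.sum_range_succ, ih, Finset.sum_range_succ]
    ring

private noncomputable def RS (g φ : ℝ → ℝ) (T : ℝ) (n : ℕ) : ℝ :=
  ∑ k ∈ Finset.range n, φ ((k : ℝ) * T / n) * (g (((k : ℝ) + 1) * T / n) - g ((k : ℝ) * T / n))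

private lemma pt_mem_Icc {T : ℝ} (hT : 0 < T) {k n : ℕ} (hn : 1 ≤ n) (hk : k ≤ n) :
    (k : ℝ) * T / n ∈ Set.Icc (0 : ℝ) T := by
  have hn0 : (0:ℝ) < n := by exact_mod_cast hn
  constructor
  · positivity
  · rw [div_le_iff₀ hn0]
    have : (k : ℝ) ≤ n := by exact_mod_cast hk
    nlinarith

private lemma RS_doubling (g φ : ℝ → ℝ) (T Cg M lam' : ℝ)
    (hT : 0 < T) (hlam' : 0 < lam') (hCg : 0 ≤ Cg) (hM : 0 ≤ M)
    (hg : HolderOnI g lam' 0 T Cg)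
    (hφ : ∀ s ∈ Set.Icc (0:ℝ) T, ∀ t ∈ Set.Icc (0:ℝ) T, |φ t - φ s| ≤ M * |t - s|)
    (n : ℕ) (hn : 1 ≤ n) :
    |RS g φ T n - RS g φ T (2 * n)| ≤ M * Cg * T ^ (1 + lam') * (n : ℝ) ^ (-lam') := by
  have hn0 : (0:ℝ) < n := by exact_mod_cast hn
  set d : ℝ := T / (2 * (n:ℝ)) with hd
  have hd0 : 0 < d := by positivity
  rw [RS, RS, sum_range_two_mul, ← Finset.sum_sub_distrib]
  have key : ∀ k ∈ Finset.range n,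
      |φ ((k:ℝ) * T / n) * (g (((k:ℝ)+1) * T / n) - g ((k:ℝ) * T / n)) -
        (φ (((2*k : ℕ):ℝ) * T / ((2*n : ℕ):ℝ)) * (g ((((2*k:ℕ):ℝ)+1) * T / ((2*n:ℕ):ℝ)) - g (((2*k:ℕ):ℝ) * T / ((2*n:ℕ):ℝ)))
          + φ (((2*k+1 : ℕ):ℝ) * T / ((2*n:ℕ):ℝ)) * (g ((((2*k+1:ℕ):ℝ)+1) * T / ((2*n:ℕ):ℝ)) - g (((2*k+1:ℕ):ℝ) * T / ((2*n:ℕ):ℝ))))|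
        ≤ M * d * (Cg * d ^ lam') := by
    intro k hk
    have hkn : k < n := Finset.mem_range.mp hk
    set t0 : ℝ := (k:ℝ) * T / n with ht0
    set t1 : ℝ := ((k:ℝ)+1) * T / n with ht1
    set u : ℝ := ((2*k+1 : ℕ):ℝ) * T / ((2*n:ℕ):ℝ) with hu
    have e0 : ((2*k : ℕ):ℝ) * T / ((2*n : ℕ):ℝ) = t0 := by
      rw [ht0]; push_cast; field_simp
    have e1 : (((2*k : ℕ):ℝ) + 1) * T / ((2*n : ℕ):ℝ) = u := by
      rw [hu]; push_cast; ring
    have e2 : (((2*k+1 : ℕ):ℝ) + 1) * T / ((2*n : ℕ):ℝ) = t1 := by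
      rw [ht1]; push_cast; field_simp; ring
    have heq : φ t0 * (g t1 - g t0) -
        (φ (((2*k : ℕ):ℝ) * T / ((2*n:ℕ):ℝ)) * (g ((((2*k:ℕ):ℝ)+1) * T / ((2*n:ℕ):ℝ)) - g (((2*k:ℕ):ℝ) * T / ((2*n:ℕ):ℝ)))
          + φ u * (g ((((2*k+1:ℕ):ℝ)+1) * T / ((2*n:ℕ):ℝ)) - g u))
        = (φ t0 - φ u) * (g t1 - g u) := by
      rw [e0, e1, e2]; ring
    rw [heq, abs_mul]
    have h1 : t0 ∈ Set.Icc (0:ℝ) T := pt_mem_Icc hT hn hkn.le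
    have h2 : t1 ∈ Set.Icc (0:ℝ) T := by
      have := pt_mem_Icc hT hn (Nat.succ_le_of_lt hkn)
      rw [ht1]; convert this using 2; push_cast; ring
    have h3 : u ∈ Set.Icc (0:ℝ) T :=
      pt_mem_Icc (k := 2*k+1) (n := 2*n) hT (by omega) (by omega)
    have dist1 : |t0 - u| = d := by
      have : t0 - u = -d := by rw [ht0, hu, hd]; push_cast; field_simp; ring
      rw [this, abs_neg, abs_of_pos hd0]
    have dist2 : |t1 - u| = d := by
      have : t1 - u = d := by rw [ht1, hu, hd]; push_cast; field_simp; ring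
      rw [this, abs_of_pos hd0]
    have b1 : |φ t0 - φ u| ≤ M * d := by
      have := hφ u h3 t0 h1; rwa [dist1] at this
    have b2 : |g t1 - g u| ≤ Cg * d ^ lam' := by
      have := hg u h3 t1 h2; rwa [dist2] at this
    exact mul_le_mul b1 b2 (abs_nonneg _) (by positivity)
  calc |∑ k ∈ Finset.range n, _| ≤ ∑ k ∈ Finset.range n, _ := Finset.abs_sum_le_sum_abs _ _
    _ ≤ ∑ _k ∈ Finset.range n, M * d * (Cg * d ^ lam') := Finset.sum_le_sum key
    _ = (n:ℝ) * (M * d * (Cg * d ^ lam')) := by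
        rw [Finset.sum_const, Finset.card_range, nsmul_eq_mul]
    _ = M * Cg * ((n:ℝ) * d ^ (1 + lam')) := by
        rw [Real.rpow_add hd0, Real.rpow_one]; ring
    _ ≤ M * Cg * (T ^ (1 + lam') * (n:ℝ) ^ (-lam')) := by
        have h1 : d ^ (1+lam') = T^(1+lam') / (2*(n:ℝ))^(1+lam') := by
          rw [hd, Real.div_rpow hT.le (by positivity)]
        have h2 : (n:ℝ)^(1+lam') ≤ (2*(n:ℝ))^(1+lam') :=
          Real.rpow_le_rpow (by positivity) (by linarith) (by linarith)
        have h3 : (n:ℝ) * (n:ℝ)^(-lam') * (n:ℝ)^(1+lam') = (n:ℝ) * (n:ℝ) ^ (1:ℝ) := by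
          rw [mul_assoc, ← Real.rpow_add hn0]; norm_num
        have h4 : (n:ℝ)^(-lam') = (n:ℝ) / (n:ℝ)^(1+lam') := by
          rw [eq_div_iff (by positivity), ← Real.rpow_add hn0]
          norm_num
        refine mul_le_mul_of_nonneg_left ?_ (by positivity)
        calc (n:ℝ) * d ^ (1+lam') = (n:ℝ) * (T^(1+lam') / (2*(n:ℝ))^(1+lam')) := by rw [h1]
          _ ≤ (n:ℝ) * (T^(1+lam') / (n:ℝ)^(1+lam')) := by gcongr
          _ = T^(1+lam') * (n:ℝ)^(-lam') := by rw [h4]; ring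
    _ = M * Cg * T ^ (1 + lam') * (n:ℝ) ^ (-lam') := by ring

private lemma RS_close (g φ : ℝ → ℝ) (T Cg M lam' Iv : ℝ)
    (hT : 0 < T) (hlam' : 0 < lam') (hCg : 0 ≤ Cg) (hM : 0 ≤ M)
    (hg : HolderOnI g lam' 0 T Cg)
    (hφ : ∀ s ∈ Set.Icc (0:ℝ) T, ∀ t ∈ Set.Icc (0:ℝ) T, |φ t - φ s| ≤ M * |t - s|)
    (hI : Filter.Tendsto (RS g φ T) Filter.atTop (nhds Iv))
    (n : ℕ) (hn : 1 ≤ n) :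
    |RS g φ T n - Iv| ≤
      M * Cg * T ^ (1 + lam') * (1 - (2:ℝ) ^ (-lam'))⁻¹ * (n : ℝ) ^ (-lam') := by
  have hn0 : (0:ℝ) < n := by exact_mod_cast hn
  set E : ℝ := M * Cg * T ^ (1 + lam') with hE
  have hE0 : 0 ≤ E := by rw [hE]; positivity
  set r : ℝ := (2:ℝ) ^ (-lam') with hr
  have hr0 : 0 < r := Real.rpow_pos_of_pos (by norm_num) _
  have hr1 : r < 1 := Real.rpow_lt_one_of_one_lt_of_neg (by norm_num) (by linarith)
  have key : ∀ J : ℕ, |RS g φ T n - RS g φ T (n * 2 ^ J)| ≤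
      E * (n:ℝ) ^ (-lam') * ∑ j ∈ Finset.range J, r ^ j := by
    intro J
    induction J with
    | zero => simp
    | succ J ih =>
      have hm : 1 ≤ n * 2 ^ J :=
        Nat.one_le_iff_ne_zero.mpr (Nat.mul_ne_zero (by omega) (pow_ne_zero _ (by omega)))
      have hstep := RS_doubling g φ T Cg M lam' hT hlam' hCg hM hg hφ (n * 2 ^ J) hm
      have hmul : n * 2 ^ (J + 1) = 2 * (n * 2 ^ J) := by ring
      have hcast : ((n * 2 ^ J : ℕ):ℝ) ^ (-lam') = (n:ℝ) ^ (-lam') * r ^ J := by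
        push_cast
        rw [Real.mul_rpow (by positivity) (by positivity), hr,
          ← Real.rpow_natCast ((2:ℝ) ^ (-lam')) J, ← Real.rpow_natCast (2:ℝ) J,
          ← Real.rpow_mul (by norm_num), ← Real.rpow_mul (by norm_num)]
        ring_nf
      calc |RS g φ T n - RS g φ T (n * 2 ^ (J+1))|
          ≤ |RS g φ T n - RS g φ T (n * 2 ^ J)| +
            |RS g φ T (n * 2 ^ J) - RS g φ T (2 * (n * 2 ^ J))| := by
            rw [hmul]; exact abs_sub_le _ _ _
        _ ≤ E * (n:ℝ) ^ (-lam') * ∑ j ∈ Finset.range J, r ^ j +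
            E * ((n:ℝ) ^ (-lam') * r ^ J) := by
            refine add_le_add ih ?_
            calc |RS g φ T (n * 2 ^ J) - RS g φ T (2 * (n * 2 ^ J))|
                ≤ E * ((n * 2 ^ J : ℕ):ℝ) ^ (-lam') := hstep
              _ = E * ((n:ℝ) ^ (-lam') * r ^ J) := by rw [hcast]
        _ = E * (n:ℝ) ^ (-lam') * ∑ j ∈ Finset.range (J+1), r ^ j := by
            rw [Finset.sum_range_succ]; ring
  have hgeom : ∀ J : ℕ, (∑ j ∈ Finset.range J, r ^ j) ≤ (1 - r)⁻¹ := by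
    intro J
    have h1r : 0 < 1 - r := by linarith
    rw [geom_sum_eq (ne_of_lt hr1), div_le_iff_of_neg (by linarith : r - 1 < 0)]
    have he : (1 - r)⁻¹ * (r - 1) = -1 := by field_simp; ring
    have hJ : 0 ≤ r ^ J := by positivity
    linarith
  have hbound : ∀ J : ℕ, |RS g φ T n - RS g φ T (n * 2 ^ J)| ≤
      E * (1 - r)⁻¹ * (n:ℝ) ^ (-lam') := by
    intro J
    refine (key J).trans ?_
    have h1r : 0 < 1 - r := by linarith
    calc E * (n:ℝ) ^ (-lam') * ∑ j ∈ Finset.range J, r ^ j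
        ≤ E * (n:ℝ) ^ (-lam') * (1 - r)⁻¹ := by
          refine mul_le_mul_of_nonneg_left (hgeom J) (by positivity)
      _ = E * (1 - r)⁻¹ * (n:ℝ) ^ (-lam') := by ring
  have hsub : Filter.Tendsto (fun J : ℕ => RS g φ T (n * 2 ^ J)) Filter.atTop (nhds Iv) := by
    refine hI.comp ?_
    refine Filter.tendsto_atTop_mono (fun J => ?_)
      (tendsto_pow_atTop_atTop_of_one_lt (by norm_num : 1 < 2))
    exact Nat.le_mul_of_pos_left _ hn
  have hlim : Filter.Tendsto (fun J : ℕ => |RS g φ T n - RS g φ T (n * 2 ^ J)|)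
      Filter.atTop (nhds |RS g φ T n - Iv|) :=
    (Filter.Tendsto.sub tendsto_const_nhds hsub).abs
  exact le_of_tendsto hlim (Filter.Eventually.of_forall hbound)

private lemma holder_sum (a : ℕ → ℝ) (ha : ∀ k, 0 ≤ a k) (n : ℕ) {H : ℝ}
    (hH0 : 0 < H) (hH1 : H < 1) :
    ∑ k ∈ Finset.range n, a k
      ≤ (n:ℝ) ^ (1 - H) * (∑ k ∈ Finset.range n, a k ^ (1/H)) ^ H := by
  have hp : 1 ≤ 1/H := by rw [le_div_iff₀ hH0]; linarith
  have h := Real.inner_le_weight_mul_Lp_of_nonneg (Finset.range n) hp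
    (fun _ => (1:ℝ)) a (fun _ => zero_le_one) ha
  simp only [one_mul, Finset.sum_const, Finset.card_range, nsmul_eq_mul, mul_one] at h
  simp only [one_div, inv_inv] at h ⊢
  exact h

/-- Deterministic small-noise Riemann–Stieltjes sum convergence (Lemma 7):
if `ε n^{1-H} → 0` then
`sup_θ |∑_k f(X^ε_{t_k},θ)(g(t_{k+1}) - g(t_k)) - ∫_0^T f(x_s,θ) dg(s)| → 0`. -/
theorem small_noise_rs_sum_convergence {Θ : Type*} [Nonempty Θ]
    (H lam lam' T c L K V Cg : ℝ)
    (hH : H ∈ Set.Ioo (0:ℝ) 1) (hT : 0 < T)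
    (hlam : lam ∈ Set.Ioo (1 - H) 1) (hlam' : lam' ∈ Set.Ioo (1 - lam) 1)
    (g : ℝ → ℝ)
    (hV : ∀ n : ℕ, 1 ≤ n →
      (∑ k ∈ Finset.range n,
          |g (((k : ℝ) + 1) * T / n) - g ((k : ℝ) * T / n)| ^ (1 / H)) ^ H ≤ V)
    (hg : HolderOnI g lam' 0 T Cg)
    (f : ℝ → Θ → ℝ) (hf : ∀ (θ : Θ) (y z : ℝ), |f y θ - f z θ| ≤ c * |y - z|)
    (x : ℝ → ℝ) (hx : ∀ s t : ℝ, |x s - x t| ≤ L * |s - t|)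
    (X : ℝ → ℝ → ℝ) (hX : ∀ ε > (0:ℝ), ∀ t ∈ Set.Icc (0:ℝ) T, |X ε t - x t| ≤ K * ε)
    (I : Θ → ℝ) (hI : ∀ θ, IsRSIntegral (fun s => f (x s) θ) g 0 T (I θ)) :
    ∀ (ns : ℕ → ℕ) (es : ℕ → ℝ), Tendsto ns atTop atTop →
      Tendsto es atTop (nhdsWithin 0 (Set.Ioi 0)) →
      Tendsto (fun j => es j * (ns j : ℝ) ^ (1 - H)) atTop (nhds 0) →
      Tendsto (fun j => ⨆ θ : Θ, |∑ k ∈ Finset.range (ns j),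
          f (X (es j) ((k : ℝ) * T / ns j)) θ
            * (g (((k : ℝ) + 1) * T / ns j) - g ((k : ℝ) * T / ns j)) - I θ|)
        atTop (nhds 0) := by
  obtain ⟨hH0, hH1⟩ := hH
  obtain ⟨hlam0, hlam1⟩ := hlam
  obtain ⟨hlam'0, hlam'1⟩ := hlam'
  have hlam'pos : 0 < lam' := by linarith
  obtain ⟨θ0⟩ := ‹Nonempty Θ›
  have hc : 0 ≤ c := le_trans (abs_nonneg _) (by simpa using hf θ0 0 1)
  have hL : 0 ≤ L := le_trans (abs_nonneg _) (by simpa using hx 0 1)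
  have hK : 0 ≤ K := by
    have := hX 1 one_pos 0 ⟨le_refl 0, hT.le⟩
    have h0 := le_trans (abs_nonneg _) this
    linarith
  have hCg : 0 ≤ Cg := by
    have h := hg 0 ⟨le_rfl, hT.le⟩ T ⟨hT.le, le_rfl⟩
    have hTl : 0 < T ^ lam' := Real.rpow_pos_of_pos hT _
    have h' : 0 ≤ Cg * T ^ lam' :=
      le_trans (abs_nonneg _) (by simpa [abs_of_pos hT] using h)
    nlinarith
  have hV0 : 0 ≤ V :=
    le_trans (Real.rpow_nonneg
      (Finset.sum_nonneg fun i _ => Real.rpow_nonneg (abs_nonneg _) _) H) (hV 1 le_rfl)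
  -- Lipschitz bound for φ θ := f ∘ x
  have hφ : ∀ θ : Θ, ∀ s ∈ Set.Icc (0:ℝ) T, ∀ t ∈ Set.Icc (0:ℝ) T,
      |f (x t) θ - f (x s) θ| ≤ (c * L) * |t - s| := by
    intro θ s _ t _
    calc |f (x t) θ - f (x s) θ| ≤ c * |x t - x s| := hf θ _ _
      _ ≤ c * (L * |t - s|) := mul_le_mul_of_nonneg_left (hx t s) hc
      _ = (c * L) * |t - s| := by ring
  have hI' : ∀ θ, Tendsto (RS g (fun s => f (x s) θ) T) atTop (nhds (I θ)) := by
    intro θ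
    have h := hI θ
    unfold IsRSIntegral at h
    have heq : (fun n : ℕ => ∑ k ∈ Finset.range n,
        f (x (0 + (k:ℝ) * (T - 0) / n)) θ *
          (g (0 + ((k:ℝ)+1) * (T - 0) / n) - g (0 + (k:ℝ) * (T - 0) / n)))
        = RS g (fun s => f (x s) θ) T := by
      funext n
      unfold RS
      apply Finset.sum_congr rfl
      intro k _
      have e1 : (0:ℝ) + (k:ℝ) * (T - 0) / n = (k:ℝ) * T / n := by ring
      have e2 : (0:ℝ) + ((k:ℝ)+1) * (T - 0) / n = ((k:ℝ)+1) * T / n := by ring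
      rw [e1, e2]
    rwa [heq] at h
  set B : ℝ := (c * L) * Cg * T ^ (1 + lam') * (1 - (2:ℝ) ^ (-lam'))⁻¹ with hB
  have hB0 : 0 ≤ B := by
    have hr1 : (2:ℝ) ^ (-lam') < 1 :=
      Real.rpow_lt_one_of_one_lt_of_neg (by norm_num) (by linarith)
    have : 0 < 1 - (2:ℝ) ^ (-lam') := by linarith
    rw [hB]; positivity
  intro ns es hns hes hprod
  have hev1 : ∀ᶠ j in atTop, 1 ≤ ns j := hns.eventually_ge_atTop 1
  have hev2 : ∀ᶠ j in atTop, 0 < es j := (tendsto_nhdsWithin_iff.mp hes).2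
  apply squeeze_zero' (g := fun j =>
      c * K * V * (es j * (ns j : ℝ) ^ (1 - H)) + B * (ns j : ℝ) ^ (-lam'))
  · exact Filter.Eventually.of_forall fun j => Real.iSup_nonneg fun θ => abs_nonneg _
  · filter_upwards [hev1, hev2] with j hn hε
    apply ciSup_le
    intro θ
    set n := ns j
    set ε := es j
    have hn0 : (0:ℝ) < n := by exact_mod_cast hn
    -- part (i): replace X by x
    have part1 : |∑ k ∈ Finset.range n,
          f (X ε ((k : ℝ) * T / n)) θ * (g (((k : ℝ) + 1) * T / n) - g ((k : ℝ) * T / n))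
        - RS g (fun s => f (x s) θ) T n|
        ≤ c * K * V * (ε * (n:ℝ) ^ (1 - H)) := by
      unfold RS
      rw [← Finset.sum_sub_distrib]
      have hterm : ∀ k ∈ Finset.range n,
          |f (X ε ((k : ℝ) * T / n)) θ * (g (((k : ℝ) + 1) * T / n) - g ((k : ℝ) * T / n))
            - f (x ((k : ℝ) * T / n)) θ * (g (((k : ℝ) + 1) * T / n) - g ((k : ℝ) * T / n))|
          ≤ (c * (K * ε)) * |g (((k : ℝ) + 1) * T / n) - g ((k : ℝ) * T / n)| := by
        intro k hk
        have hkn : k < n := Finset.mem_range.mp hk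
        have hmem := pt_mem_Icc hT hn hkn.le
        rw [← sub_mul, abs_mul]
        refine mul_le_mul_of_nonneg_right ?_ (abs_nonneg _)
        calc |f (X ε ((k : ℝ) * T / n)) θ - f (x ((k : ℝ) * T / n)) θ|
            ≤ c * |X ε ((k : ℝ) * T / n) - x ((k : ℝ) * T / n)| := hf θ _ _
          _ ≤ c * (K * ε) := mul_le_mul_of_nonneg_left (hX ε hε _ hmem) hc
      calc |∑ k ∈ Finset.range n, _| ≤ ∑ k ∈ Finset.range n, _ :=
            Finset.abs_sum_le_sum_abs _ _
        _ ≤ ∑ k ∈ Finset.range n,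
            (c * (K * ε)) * |g (((k : ℝ) + 1) * T / n) - g ((k : ℝ) * T / n)| :=
            Finset.sum_le_sum hterm
        _ = (c * (K * ε)) *
            ∑ k ∈ Finset.range n, |g (((k : ℝ) + 1) * T / n) - g ((k : ℝ) * T / n)| := by
            rw [Finset.mul_sum]
        _ ≤ (c * (K * ε)) * ((n:ℝ) ^ (1 - H) *
            (∑ k ∈ Finset.range n,
              |g (((k : ℝ) + 1) * T / n) - g ((k : ℝ) * T / n)| ^ (1/H)) ^ H) := by
            refine mul_le_mul_of_nonneg_left ?_ (by positivity)
            exact holder_sum _ (fun k => abs_nonneg _) n hH0 hH1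
        _ ≤ (c * (K * ε)) * ((n:ℝ) ^ (1 - H) * V) := by
            refine mul_le_mul_of_nonneg_left ?_ (by positivity)
            refine mul_le_mul_of_nonneg_left (hV n hn) (by positivity)
        _ = c * K * V * (ε * (n:ℝ) ^ (1 - H)) := by ring
    -- part (ii): Riemann sum approximation of the Young integral
    have part2 : |RS g (fun s => f (x s) θ) T n - I θ| ≤ B * (n:ℝ) ^ (-lam') := by
      have := RS_close g (fun s => f (x s) θ) T Cg (c * L) lam' (I θ) hT hlam'pos hCg
        (by positivity) hg (hφ θ) (hI' θ) n hn
      calc |RS g (fun s => f (x s) θ) T n - I θ|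
          ≤ (c * L) * Cg * T ^ (1 + lam') * (1 - (2:ℝ) ^ (-lam'))⁻¹ * (n:ℝ) ^ (-lam') := this
        _ = B * (n:ℝ) ^ (-lam') := by rw [hB]
    calc |∑ k ∈ Finset.range n,
          f (X ε ((k : ℝ) * T / n)) θ * (g (((k : ℝ) + 1) * T / n) - g ((k : ℝ) * T / n)) - I θ|
        ≤ |∑ k ∈ Finset.range n,
            f (X ε ((k : ℝ) * T / n)) θ * (g (((k : ℝ) + 1) * T / n) - g ((k : ℝ) * T / n))
            - RS g (fun s => f (x s) θ) T n| + |RS g (fun s => f (x s) θ) T n - I θ| :=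
          abs_sub_le _ _ _
      _ ≤ c * K * V * (ε * (n:ℝ) ^ (1 - H)) + B * (n:ℝ) ^ (-lam') := add_le_add part1 part2
  · have t1 : Tendsto (fun j => c * K * V * (es j * (ns j:ℝ) ^ (1 - H))) atTop (nhds 0) := by
      simpa using hprod.const_mul (c * K * V)
    have t2 : Tendsto (fun j => B * (ns j:ℝ) ^ (-lam')) atTop (nhds 0) := by
      have h3 : Tendsto (fun j => ((ns j : ℝ)) ^ (-lam')) atTop (nhds 0) :=
        (tendsto_rpow_neg_atTop hlam'pos).comp (tendsto_natCast_atTop_atTop.comp hns)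
      simpa using h3.const_mul B
    simpa using t1.add t2
end

section
/- Hölder-norm control of the composed difference (key step of Lemma 8): Let $H > 1/2$, $\lambda \in (1/2, H)$. Let $f \in C^{1}$ in $x$ with $\sup_\theta|f(x,\theta)-f(y,\theta)| \le c|x-y|$ and $\sup_\theta |\partial_x f(x,\theta) - \partial_x f(y,\theta)| \le c|x-y|$. Let $x : [0,T] \to \mathbb{R}$ solve $\dot x = b(x,\theta_0)$ and $X^\varepsilon_t = x_0 + \int_0^t b(X^\varepsilon_s,\theta_0)ds + \varepsilon g_t$ with $g$ $\lambda$-Hölder. Then $\sup_{\theta \in \Theta} \| f(X^\varepsilon_\cdot,\theta) - f(x_\cdot,\theta) \|_{\lambda;[0,T]} \to 0$ as $\varepsilon \downarrow 0$, where $\|\cdot\|_{\lambda}$ is the $\lambda$-Hölder seminorm. -/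
open Filter MeasureTheory intervalIntegral

lemma abs_deriv_le_of_lip {c : ℝ} {F F' : ℝ → ℝ}
    (h : ∀ y z, |F y - F z| ≤ c * |y - z|) (hd : ∀ y, HasDerivAt F (F' y) y)
    (y : ℝ) : |F' y| ≤ c := by
  have hs : Tendsto (slope F y) (nhdsWithin y {y}ᶜ) (nhds (F' y)) :=
    hasDerivAt_iff_tendsto_slope.1 (hd y)
  refine le_of_tendsto hs.abs ?_
  filter_upwards [self_mem_nhdsWithin] with z hz
  have hzy : z - y ≠ 0 := sub_ne_zero.2 hz
  rw [slope_def_field, div_eq_inv_mul, abs_mul, abs_inv,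
    inv_mul_le_iff₀ (by positivity)]
  calc |F z - F y| ≤ c * |z - y| := h z y
    _ = |z - y| * c := mul_comm _ _

lemma lip_continuous {c : ℝ} {F : ℝ → ℝ} (hc : 0 ≤ c)
    (h : ∀ y z, |F y - F z| ≤ c * |y - z|) : Continuous F := by
  have : LipschitzWith (Real.toNNReal c) F := by
    apply LipschitzWith.of_dist_le_mul
    intro y z
    rw [Real.dist_eq, Real.dist_eq, Real.coe_toNNReal c hc]
    exact h y z
  exact this.continuous

/-- Integral-form Grönwall. -/
lemma gronwall_int {c M T : ℝ} (hc : 0 ≤ c) (hM : 0 ≤ M) {δ : ℝ → ℝ}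
    (hδc : ContinuousOn δ (Set.Icc 0 T))
    (h : ∀ t ∈ Set.Icc (0:ℝ) T, |δ t| ≤ c * (∫ u in (0:ℝ)..t, |δ u|) + M) :
    ∀ t ∈ Set.Icc (0:ℝ) T, |δ t| ≤ M * (1 + c * T * Real.exp (c * T)) := by
  intro t ht
  have hT : 0 ≤ T := le_trans ht.1 ht.2
  have habs : ContinuousOn (fun u => |δ u|) (Set.Icc 0 T) := hδc.abs
  set φ : ℝ → ℝ := fun t => ∫ u in (0:ℝ)..t, |δ u| with hφdef
  have hφc : ContinuousOn φ (Set.Icc 0 T) := by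
    have h1 : IntegrableOn (fun u => |δ u|) (Set.uIcc 0 T) volume := by
      rw [Set.uIcc_of_le hT]; exact habs.integrableOn_Icc
    have := intervalIntegral.continuousOn_primitive_interval (b := T) h1
    rwa [Set.uIcc_of_le hT] at this
  have hφ0 : ∀ t ∈ Set.Icc (0:ℝ) T, 0 ≤ φ t := by
    intro t ht
    exact intervalIntegral.integral_nonneg ht.1 (fun u _ => abs_nonneg _)
  set w : ℝ → ℝ := fun t => Real.exp (-(c * t)) * φ t - M * t with hwdef
  have hwc : ContinuousOn w (Set.Icc 0 T) := by
    apply ContinuousOn.sub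
    · exact ((Real.continuous_exp.comp (continuous_const.mul continuous_id).neg).continuousOn).mul hφc
    · exact (continuous_const.mul continuous_id).continuousOn
  have hwderiv : ∀ s ∈ Set.Ioo (0:ℝ) T, HasDerivAt w
      (-c * Real.exp (-(c * s)) * φ s + Real.exp (-(c * s)) * |δ s| - M) s := by
    intro s hs
    have hφd : HasDerivAt φ (|δ s|) s := by
      apply intervalIntegral.integral_hasDerivAt_right
      · exact (habs.mono (by rw [Set.uIcc_of_le hs.1.le]; exact Set.Icc_subset_Icc le_rfl hs.2.le)).intervalIntegrable
      · exact (habs.mono Set.Ioo_subset_Icc_self).stronglyMeasurableAtFilter isOpen_Ioo s hs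
      · exact (habs.mono Set.Ioo_subset_Icc_self).continuousAt (Ioo_mem_nhds hs.1 hs.2)
    have he : HasDerivAt (fun t => Real.exp (-(c * t))) (-c * Real.exp (-(c * s))) s := by
      have h1 : HasDerivAt (fun t : ℝ => -(c * t)) (-c) s := by
        simpa using ((hasDerivAt_id s).const_mul c).fun_neg
      convert h1.exp using 1
      ring
    have := (he.fun_mul hφd).fun_sub ((hasDerivAt_id s).const_mul M)
    exact this.congr_deriv (by ring)
  have hwanti : AntitoneOn w (Set.Icc 0 T) := by
    apply antitoneOn_of_deriv_nonpos (convex_Icc 0 T) hwc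
    · intro s hs
      rw [interior_Icc] at hs
      exact ((hwderiv s hs).differentiableAt).differentiableWithinAt
    · intro s hs
      rw [interior_Icc] at hs
      rw [(hwderiv s hs).deriv]
      have hmem : s ∈ Set.Icc (0:ℝ) T := ⟨hs.1.le, hs.2.le⟩
      have h1 : |δ s| - c * φ s ≤ M := by linarith [h s hmem]
      have hexp : Real.exp (-(c * s)) ≤ 1 :=
        Real.exp_le_one_iff.2 (by nlinarith [hs.1.le])
      have hexp0 : (0:ℝ) < Real.exp (-(c * s)) := Real.exp_pos _
      nlinarith [hφ0 s hmem, mul_le_mul_of_nonneg_left h1 hexp0.le]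
  have hw0 : w 0 = 0 := by simp [hwdef, hφdef]
  have hwt : w t ≤ 0 := by
    rw [← hw0]
    exact hwanti (Set.left_mem_Icc.2 hT) ht ht.1
  have hφt : φ t ≤ M * t * Real.exp (c * t) := by
    have : Real.exp (-(c * t)) * φ t ≤ M * t := by
      simpa [hwdef] using sub_nonpos.1 hwt
    calc φ t = Real.exp (c * t) * (Real.exp (-(c * t)) * φ t) := by
          rw [← mul_assoc, ← Real.exp_add]; simp
      _ ≤ Real.exp (c * t) * (M * t) :=
          mul_le_mul_of_nonneg_left this (Real.exp_pos _).le
      _ = M * t * Real.exp (c * t) := by ring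
  have hφT : φ t ≤ M * T * Real.exp (c * T) := by
    refine le_trans hφt ?_
    have h1 : Real.exp (c * t) ≤ Real.exp (c * T) :=
      Real.exp_le_exp.2 (mul_le_mul_of_nonneg_left ht.2 hc)
    have h2 : M * t ≤ M * T := mul_le_mul_of_nonneg_left ht.2 hM
    nlinarith [Real.exp_pos (c * t), mul_nonneg hM ht.1]
  calc |δ t| ≤ c * φ t + M := h t ht
    _ ≤ c * (M * T * Real.exp (c * T)) + M := by nlinarith
    _ = M * (1 + c * T * Real.exp (c * T)) := by ring

lemma segment_ftc {Θ : Type*} {c : ℝ} (hc : 0 ≤ c) {f f' : ℝ → Θ → ℝ}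
    (hderiv : ∀ (θ : Θ) (y : ℝ), HasDerivAt (fun z => f z θ) (f' y θ) y)
    (hf'L : ∀ (θ : Θ) (y z : ℝ), |f' y θ - f' z θ| ≤ c * |y - z|)
    (θ : Θ) (a b : ℝ) :
    f b θ - f a θ = ∫ r in (0:ℝ)..1, f' (a + r * (b - a)) θ * (b - a) := by
  have hu : ∀ r : ℝ, HasDerivAt (fun r : ℝ => a + r * (b - a)) (b - a) r := by
    intro r
    simpa using ((hasDerivAt_id r).mul_const (b - a)).const_add a
  have hP : ∀ r : ℝ, HasDerivAt (fun r => f (a + r * (b - a)) θ)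
      (f' (a + r * (b - a)) θ * (b - a)) r := by
    intro r
    exact (hderiv θ _).comp r (hu r)
  have hcont : Continuous (fun r : ℝ => f' (a + r * (b - a)) θ * (b - a)) :=
    ((lip_continuous hc (fun y z => hf'L θ y z)).comp
      (continuous_const.add (continuous_id.mul continuous_const))).mul continuous_const
  have := intervalIntegral.integral_eq_sub_of_hasDerivAt
    (f := fun r => f (a + r * (b - a)) θ) (fun r _ => hP r) (hcont.intervalIntegrable 0 1)
  rw [this]
  norm_num

/-- The `l`-Hölder seminorm of `u` on `[a,b]`. -/
noncomputable def holderSemi (l a b : ℝ) (u : ℝ → ℝ) : ℝ :=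
  sSup {y | ∃ s t : ℝ, a ≤ s ∧ s < t ∧ t ≤ b ∧ y = |u t - u s| / (t - s) ^ l}

set_option maxHeartbeats 2000000 in
/-- Hölder-norm control of the composed difference (key step of Lemma 8):
`sup_θ ‖f(X^ε_·,θ) - f(x_·,θ)‖_{λ;[0,T]} → 0` as `ε ↓ 0`. -/
theorem holder_seminorm_convergence {Θ : Type*} (H lam T c x0 Cg : ℝ)
    (hH : 1 / 2 < H) (hH1 : H < 1) (hlam : lam ∈ Set.Ioo (1/2 : ℝ) H)
    (hT : 0 < T) (hc : 0 < c)
    (f f' : ℝ → Θ → ℝ)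
    (hderiv : ∀ (θ : Θ) (y : ℝ), HasDerivAt (fun z => f z θ) (f' y θ) y)
    (hfL : ∀ (θ : Θ) (y z : ℝ), |f y θ - f z θ| ≤ c * |y - z|)
    (hf'L : ∀ (θ : Θ) (y z : ℝ), |f' y θ - f' z θ| ≤ c * |y - z|)
    (b : ℝ → ℝ)
    (hbL : ∀ y z : ℝ, |b y - b z| ≤ c * |y - z|)
    (hbG : ∀ y : ℝ, |b y| ≤ c * (1 + |y|))
    (g : ℝ → ℝ)
    (hg : ∀ s ∈ Set.Icc (0:ℝ) T, ∀ t ∈ Set.Icc (0:ℝ) T, |g t - g s| ≤ Cg * |t - s| ^ lam)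
    (x : ℝ → ℝ) (hxc : ContinuousOn x (Set.Icc 0 T))
    (hx : ∀ t ∈ Set.Icc (0:ℝ) T, x t = x0 + ∫ s in (0:ℝ)..t, b (x s))
    (X : ℝ → ℝ → ℝ) (hXc : ∀ ε, ContinuousOn (X ε) (Set.Icc 0 T))
    (hX : ∀ ε > (0:ℝ), ∀ t ∈ Set.Icc (0:ℝ) T,
      X ε t = x0 + (∫ s in (0:ℝ)..t, b (X ε s)) + ε * g t) :
    Tendsto (fun ε => ⨆ θ : Θ, holderSemi lam 0 T (fun t => f (X ε t) θ - f (x t) θ))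
      (nhdsWithin 0 (Set.Ioi 0)) (nhds 0) := by
  obtain ⟨hl2, hlH⟩ := hlam
  have hlam0 : (0:ℝ) < lam := lt_trans (by norm_num) hl2
  have hlam1 : lam < 1 := lt_trans hlH hH1
  have hc0 : (0:ℝ) ≤ c := hc.le
  have h0T : (0:ℝ) ∈ Set.Icc (0:ℝ) T := ⟨le_rfl, hT.le⟩
  have hT0T : T ∈ Set.Icc (0:ℝ) T := ⟨hT.le, le_rfl⟩
  -- Cg ≥ 0
  have hCg : 0 ≤ Cg := by
    have h1 := hg 0 h0T T hT0T
    have hTl : (0:ℝ) < T ^ lam := Real.rpow_pos_of_pos hT lam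
    rw [show |T - (0:ℝ)| = T by rw [sub_zero, abs_of_nonneg hT.le]] at h1
    nlinarith [abs_nonneg (g T - g 0)]
  -- bound on |g|
  set Mg : ℝ := |g 0| + Cg * T ^ lam with hMgdef
  have hTlam0 : (0:ℝ) ≤ T ^ lam := (Real.rpow_pos_of_pos hT lam).le
  have hMg0 : 0 ≤ Mg := add_nonneg (abs_nonneg _) (mul_nonneg hCg hTlam0)
  have hMg : ∀ t ∈ Set.Icc (0:ℝ) T, |g t| ≤ Mg := by
    intro t ht
    have h1 := hg 0 h0T t ht
    rw [show |t - (0:ℝ)| = t by rw [sub_zero, abs_of_nonneg ht.1]] at h1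
    have h2 : t ^ lam ≤ T ^ lam := Real.rpow_le_rpow ht.1 ht.2 hlam0.le
    calc |g t| ≤ |g 0| + |g t - g 0| := by
          have := abs_add_le (g 0) (g t - g 0); simpa using this
      _ ≤ |g 0| + Cg * T ^ lam := by
          refine add_le_add le_rfl (le_trans h1 ?_)
          exact mul_le_mul_of_nonneg_left h2 hCg
  -- b continuous
  have hbc : Continuous b := lip_continuous hc0 hbL
  -- bound on |x|
  obtain ⟨Mx, hMx⟩ := isCompact_Icc.exists_bound_of_continuousOn hxc
  simp only [Real.norm_eq_abs] at hMx
  have hMx0 : 0 ≤ Mx := le_trans (abs_nonneg _) (hMx 0 h0T)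
  -- constants
  set C1 : ℝ := Mg * (1 + c * T * Real.exp (c * T)) with hC1def
  have hC10 : 0 ≤ C1 := by
    apply mul_nonneg hMg0
    positivity
  set MX : ℝ := Mx + C1 with hMXdef
  have hMX0 : 0 ≤ MX := add_nonneg hMx0 hC10
  -- integrability helper
  have hci : ∀ (F : ℝ → ℝ), ContinuousOn F (Set.Icc 0 T) → ∀ s t : ℝ, 0 ≤ s → s ≤ t → t ≤ T →
      IntervalIntegrable F volume s t := by
    intro F hF s t hs hst htT
    exact (hF.mono (by rw [Set.uIcc_of_le hst]; exact Set.Icc_subset_Icc hs htT)).intervalIntegrable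
  have hbXc : ∀ ε, ContinuousOn (fun u => b (X ε u)) (Set.Icc 0 T) :=
    fun ε => hbc.comp_continuousOn (hXc ε)
  have hbxc : ContinuousOn (fun u => b (x u)) (Set.Icc 0 T) :=
    hbc.comp_continuousOn hxc
  -- Grönwall bound
  have hδbound : ∀ ε : ℝ, 0 < ε → ∀ t ∈ Set.Icc (0:ℝ) T, |X ε t - x t| ≤ ε * C1 := by
    intro ε hε
    have hδc : ContinuousOn (fun t => X ε t - x t) (Set.Icc 0 T) := (hXc ε).sub hxc
    have key : ∀ t ∈ Set.Icc (0:ℝ) T,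
        |X ε t - x t| ≤ c * (∫ u in (0:ℝ)..t, |X ε u - x u|) + ε * Mg := by
      intro t ht
      have hI1 : IntervalIntegrable (fun u => b (X ε u)) volume 0 t :=
        hci _ (hbXc ε) 0 t le_rfl ht.1 ht.2
      have hI2 : IntervalIntegrable (fun u => b (x u)) volume 0 t :=
        hci _ hbxc 0 t le_rfl ht.1 ht.2
      have hδt : X ε t - x t = (∫ u in (0:ℝ)..t, (b (X ε u) - b (x u))) + ε * g t := by
        rw [intervalIntegral.integral_sub hI1 hI2, hX ε hε t ht, hx t ht]
        ring
      rw [hδt]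
      have h1 : |(∫ u in (0:ℝ)..t, (b (X ε u) - b (x u))) + ε * g t|
          ≤ |∫ u in (0:ℝ)..t, (b (X ε u) - b (x u))| + ε * |g t| := by
        refine le_trans (abs_add_le _ _) ?_
        rw [abs_mul, abs_of_pos hε]
      refine le_trans h1 ?_
      have h2 : |∫ u in (0:ℝ)..t, (b (X ε u) - b (x u))|
          ≤ ∫ u in (0:ℝ)..t, |b (X ε u) - b (x u)| :=
        intervalIntegral.abs_integral_le_integral_abs ht.1
      have h3 : (∫ u in (0:ℝ)..t, |b (X ε u) - b (x u)|)
          ≤ ∫ u in (0:ℝ)..t, c * |X ε u - x u| := by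
        apply intervalIntegral.integral_mono_on ht.1
        · exact hci _ ((hbXc ε).sub hbxc).abs 0 t le_rfl ht.1 ht.2
        · exact hci _ (hδc.abs.const_smul c) 0 t le_rfl ht.1 ht.2
        · intro u _
          exact hbL _ _
      have h4 : (∫ u in (0:ℝ)..t, c * |X ε u - x u|)
          = c * ∫ u in (0:ℝ)..t, |X ε u - x u| :=
        intervalIntegral.integral_const_mul _ _
      have h5 : ε * |g t| ≤ ε * Mg := mul_le_mul_of_nonneg_left (hMg t ht) hε.le
      calc |∫ u in (0:ℝ)..t, (b (X ε u) - b (x u))| + ε * |g t|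
          ≤ (∫ u in (0:ℝ)..t, c * |X ε u - x u|) + ε * Mg := add_le_add (le_trans h2 h3) h5
        _ = c * (∫ u in (0:ℝ)..t, |X ε u - x u|) + ε * Mg := by rw [h4]
    intro t ht
    have := gronwall_int hc0 (mul_nonneg hε.le hMg0) hδc key t ht
    calc |X ε t - x t| ≤ (ε * Mg) * (1 + c * T * Real.exp (c * T)) := this
      _ = ε * C1 := by rw [hC1def]; ring
  -- X bound for ε ≤ 1
  have hXb : ∀ ε ∈ Set.Ioc (0:ℝ) 1, ∀ t ∈ Set.Icc (0:ℝ) T, |X ε t| ≤ MX := by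
    intro ε hε t ht
    have h1 := hδbound ε hε.1 t ht
    have h2 : ε * C1 ≤ C1 := by nlinarith [hε.1.le, hε.2]
    have := abs_sub_abs_le_abs_sub (X ε t) (x t)
    have := hMx t ht
    rw [hMXdef]
    linarith
  -- derivative bound
  have hf'b : ∀ (θ : Θ) (y : ℝ), |f' y θ| ≤ c := by
    intro θ y
    exact abs_deriv_le_of_lip (fun y z => hfL θ y z) (hderiv θ) y
  -- key constant
  set T1 : ℝ := T ^ (1 - lam) with hT1def
  have hT10 : 0 ≤ T1 := (Real.rpow_pos_of_pos hT _).le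
  set K : ℝ := c * C1 * c * (1 + MX) * T1 + c * C1 * Cg + c * c * C1 * T1 + c * Cg with hKdef
  have hK0 : 0 ≤ K := by positivity
  -- key increment estimate
  have hkey : ∀ ε ∈ Set.Ioc (0:ℝ) 1, ∀ (θ : Θ), ∀ s t : ℝ, 0 ≤ s → s < t → t ≤ T →
      |(f (X ε t) θ - f (x t) θ) - (f (X ε s) θ - f (x s) θ)| ≤ ε * K * (t - s) ^ lam := by
    intro ε hε θ s t hs hst htT
    have hsT : s ∈ Set.Icc (0:ℝ) T := ⟨hs, le_trans hst.le htT⟩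
    have htT' : t ∈ Set.Icc (0:ℝ) T := ⟨le_trans hs hst.le, htT⟩
    have hts0 : (0:ℝ) < t - s := sub_pos.2 hst
    have htsl0 : (0:ℝ) < (t - s) ^ lam := Real.rpow_pos_of_pos hts0 lam
    -- ΔX formula
    have hIadj : ∀ (F : ℝ → ℝ), ContinuousOn F (Set.Icc 0 T) →
        (∫ u in (0:ℝ)..t, F u) - (∫ u in (0:ℝ)..s, F u) = ∫ u in s..t, F u := by
      intro F hF
      have := intervalIntegral.integral_add_adjacent_intervals
        (hci _ hF 0 s le_rfl hs hsT.2) (hci _ hF s t hs hst.le htT)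
      linarith
    have hΔX : X ε t - X ε s = (∫ u in s..t, b (X ε u)) + ε * (g t - g s) := by
      rw [hX ε hε.1 t htT', hX ε hε.1 s hsT, ← hIadj _ (hbXc ε)]
      ring
    have hΔx : x t - x s = ∫ u in s..t, b (x u) := by
      rw [hx t htT', hx s hsT, ← hIadj _ hbxc]
      ring
    -- bound on ε |g t - g s|
    have hgb : ε * |g t - g s| ≤ ε * (Cg * (t - s) ^ lam) := by
      have h1 := hg s hsT t htT'
      rw [show |t - s| = t - s from abs_of_pos hts0] at h1
      exact mul_le_mul_of_nonneg_left h1 hε.1.le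
    -- |ΔX| bound
    have hΔXb : |X ε t - X ε s| ≤ c * (1 + MX) * (t - s) + Cg * (t - s) ^ lam := by
      rw [hΔX]
      have h1 : ‖∫ u in s..t, b (X ε u)‖ ≤ (c * (1 + MX)) * |t - s| := by
        apply intervalIntegral.norm_integral_le_of_norm_le_const
        intro u hu
        rw [Set.uIoc_of_le hst.le] at hu
        have huT : u ∈ Set.Icc (0:ℝ) T := ⟨le_trans hs hu.1.le, le_trans hu.2 htT⟩
        rw [Real.norm_eq_abs]
        calc |b (X ε u)| ≤ c * (1 + |X ε u|) := hbG _
          _ ≤ c * (1 + MX) := by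
              have := hXb ε hε u huT
              nlinarith
      rw [Real.norm_eq_abs, show |t - s| = t - s from abs_of_pos hts0] at h1
      have h2 : ε * (Cg * (t - s) ^ lam) ≤ Cg * (t - s) ^ lam := by
        nlinarith [hε.1.le, hε.2, mul_nonneg hCg htsl0.le]
      calc |(∫ u in s..t, b (X ε u)) + ε * (g t - g s)|
          ≤ |∫ u in s..t, b (X ε u)| + ε * |g t - g s| := by
            refine le_trans (abs_add_le _ _) ?_
            rw [abs_mul, abs_of_pos hε.1]
        _ ≤ c * (1 + MX) * (t - s) + Cg * (t - s) ^ lam := by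
            have := le_trans hgb h2
            linarith
    -- |ΔX - Δx| bound
    have hΔdb : |(X ε t - X ε s) - (x t - x s)|
        ≤ ε * (c * C1 * (t - s) + Cg * (t - s) ^ lam) := by
      have hId : (X ε t - X ε s) - (x t - x s)
          = (∫ u in s..t, (b (X ε u) - b (x u))) + ε * (g t - g s) := by
        rw [hΔX, hΔx, intervalIntegral.integral_sub
          (hci _ (hbXc ε) s t hs hst.le htT) (hci _ hbxc s t hs hst.le htT)]
        ring
      rw [hId]
      have h1 : ‖∫ u in s..t, (b (X ε u) - b (x u))‖ ≤ (ε * (c * C1)) * |t - s| := by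
        apply intervalIntegral.norm_integral_le_of_norm_le_const
        intro u hu
        rw [Set.uIoc_of_le hst.le] at hu
        have huT : u ∈ Set.Icc (0:ℝ) T := ⟨le_trans hs hu.1.le, le_trans hu.2 htT⟩
        rw [Real.norm_eq_abs]
        calc |b (X ε u) - b (x u)| ≤ c * |X ε u - x u| := hbL _ _
          _ ≤ c * (ε * C1) := mul_le_mul_of_nonneg_left (hδbound ε hε.1 u huT) hc0
          _ = ε * (c * C1) := by ring
      rw [Real.norm_eq_abs, show |t - s| = t - s from abs_of_pos hts0] at h1
      calc |(∫ u in s..t, (b (X ε u) - b (x u))) + ε * (g t - g s)|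
          ≤ |∫ u in s..t, (b (X ε u) - b (x u))| + ε * |g t - g s| := by
            refine le_trans (abs_add_le _ _) ?_
            rw [abs_mul, abs_of_pos hε.1]
        _ ≤ ε * (c * C1) * (t - s) + ε * (Cg * (t - s) ^ lam) := add_le_add h1 hgb
        _ = ε * (c * C1 * (t - s) + Cg * (t - s) ^ lam) := by ring
    -- FTC representation of the difference
    have hftcX := segment_ftc hc0 hderiv hf'L θ (X ε s) (X ε t)
    have hftcx := segment_ftc hc0 hderiv hf'L θ (x s) (x t)
    have hcontY : Continuous (fun r : ℝ => f' (X ε s + r * (X ε t - X ε s)) θ * (X ε t - X ε s)) :=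
      ((lip_continuous hc0 (fun y z => hf'L θ y z)).comp
        (continuous_const.add (continuous_id.mul continuous_const))).mul continuous_const
    have hcontZ : Continuous (fun r : ℝ => f' (x s + r * (x t - x s)) θ * (x t - x s)) :=
      ((lip_continuous hc0 (fun y z => hf'L θ y z)).comp
        (continuous_const.add (continuous_id.mul continuous_const))).mul continuous_const
    have hD : (f (X ε t) θ - f (x t) θ) - (f (X ε s) θ - f (x s) θ)
        = ∫ r in (0:ℝ)..1, (f' (X ε s + r * (X ε t - X ε s)) θ * (X ε t - X ε s)
            - f' (x s + r * (x t - x s)) θ * (x t - x s)) := by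
      rw [intervalIntegral.integral_sub (hcontY.intervalIntegrable 0 1)
        (hcontZ.intervalIntegrable 0 1), ← hftcX, ← hftcx]
      ring
    -- bound the integrand
    set B : ℝ := c * (ε * C1) * |X ε t - X ε s| + c * |(X ε t - X ε s) - (x t - x s)| with hBdef
    have hDb : |(f (X ε t) θ - f (x t) θ) - (f (X ε s) θ - f (x s) θ)| ≤ B := by
      rw [hD]
      have h1 : ∀ r ∈ Set.uIoc (0:ℝ) 1,
          ‖f' (X ε s + r * (X ε t - X ε s)) θ * (X ε t - X ε s)
            - f' (x s + r * (x t - x s)) θ * (x t - x s)‖ ≤ B := by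
        intro r hr
        rw [Set.uIoc_of_le zero_le_one] at hr
        have hr0 : 0 ≤ r := hr.1.le
        have hr1 : r ≤ 1 := hr.2
        rw [Real.norm_eq_abs]
        set Y := X ε s + r * (X ε t - X ε s)
        set Z := x s + r * (x t - x s)
        have hYZ : |Y - Z| ≤ ε * C1 := by
          have hYZeq : Y - Z = (1 - r) * (X ε s - x s) + r * (X ε t - x t) := by
            simp only [Y, Z]; ring
          rw [hYZeq]
          have h1 := hδbound ε hε.1 s hsT
          have h2 := hδbound ε hε.1 t htT'
          calc |(1 - r) * (X ε s - x s) + r * (X ε t - x t)|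
              ≤ |(1 - r) * (X ε s - x s)| + |r * (X ε t - x t)| := abs_add_le _ _
            _ = (1 - r) * |X ε s - x s| + r * |X ε t - x t| := by
                rw [abs_mul, abs_mul, abs_of_nonneg (by linarith : (0:ℝ) ≤ 1 - r),
                  abs_of_nonneg hr0]
            _ ≤ (1 - r) * (ε * C1) + r * (ε * C1) := by
                refine add_le_add ?_ ?_
                · exact mul_le_mul_of_nonneg_left h1 (by linarith)
                · exact mul_le_mul_of_nonneg_left h2 hr0
            _ = ε * C1 := by ring
        have hsplit : f' Y θ * (X ε t - X ε s) - f' Z θ * (x t - x s)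
            = (f' Y θ - f' Z θ) * (X ε t - X ε s)
              + f' Z θ * ((X ε t - X ε s) - (x t - x s)) := by ring
        rw [hsplit]
        calc |(f' Y θ - f' Z θ) * (X ε t - X ε s)
              + f' Z θ * ((X ε t - X ε s) - (x t - x s))|
            ≤ |f' Y θ - f' Z θ| * |X ε t - X ε s|
              + |f' Z θ| * |(X ε t - X ε s) - (x t - x s)| := by
              refine le_trans (abs_add_le _ _) ?_
              rw [abs_mul, abs_mul]
          _ ≤ (c * (ε * C1)) * |X ε t - X ε s|
              + c * |(X ε t - X ε s) - (x t - x s)| := by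
              refine add_le_add ?_ ?_
              · refine mul_le_mul_of_nonneg_right ?_ (abs_nonneg _)
                exact le_trans (hf'L θ Y Z) (mul_le_mul_of_nonneg_left hYZ hc0)
              · exact mul_le_mul_of_nonneg_right (hf'b θ Z) (abs_nonneg _)
          _ = B := by rw [hBdef]
      have := intervalIntegral.norm_integral_le_of_norm_le_const h1
      rw [Real.norm_eq_abs] at this
      simpa using this
    -- combine
    have hts_le : t - s ≤ T1 * (t - s) ^ lam := by
      have h1 : t - s = (t - s) ^ lam * (t - s) ^ (1 - lam) := by
        rw [← Real.rpow_add hts0]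
        norm_num
      have h2 : (t - s) ^ (1 - lam) ≤ T ^ (1 - lam) :=
        Real.rpow_le_rpow hts0.le (by linarith [hsT.1, htT]) (by linarith)
      calc t - s = (t - s) ^ lam * (t - s) ^ (1 - lam) := h1
        _ ≤ (t - s) ^ lam * T ^ (1 - lam) := mul_le_mul_of_nonneg_left h2 htsl0.le
        _ = T1 * (t - s) ^ lam := by rw [hT1def]; ring
    refine le_trans hDb ?_
    have hB : B ≤ ε * K * (t - s) ^ lam := by
      have h1 := hΔXb
      have h2 := hΔdb
      have hε0 := hε.1.le
      have hε1 := hε.2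
      rw [hBdef, hKdef]
      have e1 : c * (ε * C1) * |X ε t - X ε s|
          ≤ c * (ε * C1) * (c * (1 + MX) * (t - s) + Cg * (t - s) ^ lam) := by
        refine mul_le_mul_of_nonneg_left h1 ?_
        positivity
      have e2 : c * |(X ε t - X ε s) - (x t - x s)|
          ≤ c * (ε * (c * C1 * (t - s) + Cg * (t - s) ^ lam)) :=
        mul_le_mul_of_nonneg_left h2 hc0
      have e3 : c * (ε * C1) * (c * (1 + MX) * (t - s))
          ≤ c * (ε * C1) * (c * (1 + MX) * (T1 * (t - s) ^ lam)) := by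
        refine mul_le_mul_of_nonneg_left ?_ (by positivity)
        exact mul_le_mul_of_nonneg_left hts_le (by positivity)
      have e4 : c * (ε * (c * C1 * (t - s)))
          ≤ c * (ε * (c * C1 * (T1 * (t - s) ^ lam))) := by
        refine mul_le_mul_of_nonneg_left ?_ hc0
        refine mul_le_mul_of_nonneg_left ?_ hε0
        exact mul_le_mul_of_nonneg_left hts_le (by positivity)
      nlinarith [mul_nonneg (mul_nonneg hc0 hC10) (mul_nonneg hCg htsl0.le),
        mul_nonneg hc0 (mul_nonneg hCg htsl0.le), htsl0.le,
        mul_nonneg hT10 htsl0.le, mul_nonneg hc0 hC10]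
    exact hB
  -- upper bound on the seminorm
  have hsemi : ∀ ε ∈ Set.Ioc (0:ℝ) 1, ∀ θ : Θ,
      holderSemi lam 0 T (fun t => f (X ε t) θ - f (x t) θ) ≤ ε * K := by
    intro ε hε θ
    apply csSup_le
    · exact ⟨_, 0, T, le_rfl, hT, le_rfl, rfl⟩
    · rintro y ⟨s, t, hs, hst, htT, rfl⟩
      rw [div_le_iff₀ (Real.rpow_pos_of_pos (sub_pos.2 hst) lam)]
      exact hkey ε hε θ s t hs hst htT
  have hnonneg : ∀ ε : ℝ, ∀ θ : Θ,
      0 ≤ holderSemi lam 0 T (fun t => f (X ε t) θ - f (x t) θ) := by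
    intro ε θ
    apply Real.sSup_nonneg
    rintro y ⟨s, t, hs, hst, htT, rfl⟩
    exact div_nonneg (abs_nonneg _) (Real.rpow_nonneg (by linarith) lam)
  -- conclude
  apply squeeze_zero' (g := fun ε => K * ε)
  · exact Eventually.of_forall (fun ε => Real.iSup_nonneg (hnonneg ε))
  · filter_upwards [Ioc_mem_nhdsGT_of_mem (Set.mem_Ico.2 ⟨le_rfl, one_pos⟩)] with ε hε
    refine Real.iSup_le (fun θ => ?_) (mul_nonneg hK0 hε.1.le)
    rw [mul_comm]
    exact hsemi ε hε θ
  · have h : Tendsto (fun ε : ℝ => K * ε) (nhds 0) (nhds 0) := by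
      have h2 : Continuous (fun ε : ℝ => K * ε) := continuous_const.mul continuous_id
      simpa using h2.tendsto (0:ℝ)
    exact h.mono_left nhdsWithin_le_nhds
end

section
/- Vanishing of the drift correction term in the score: under the growth condition $\sup_\theta |\partial_{\theta_i} b(x,\theta)| \le C(1+|x|^N)$, the Lipschitz condition on $b$, and the condition $\varepsilon n \to \infty$, the term $H^{(1)}_{n,\varepsilon} := \varepsilon^{-1} \sum_{k=0}^{n-1} \partial_{\theta_i} b(X_{t_k}^{\theta_0,\varepsilon},\theta_0) \int_{t_k}^{t_{k+1}} (b(X_s^{\theta_0,\varepsilon},\theta_0) - b(X_{t_k}^{\theta_0,\varepsilon},\theta_0))\,ds$ satisfies $|H^{(1)}_{n,\varepsilon}| \le C'\big(\tfrac{1}{n\varepsilon} + n^{-\lambda}\big)$ for any $\lambda \in (0,H)$, where $C'$ depends on $\sup_t |W_t^H|$, $\|W^H\|_{\lambda}$ and $\sup_t |x_t^{\theta_0}|$; hence $H^{(1)}_{n,\varepsilon} \to 0$ as $n \to \infty$, $\varepsilon \downarrow 0$ with $n\varepsilon \to \infty$. -/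
open Filter Set Topology intervalIntegral


-- Step 1: sup bound on X via Gronwall
lemma sde_sup_bound {c x0 MW ε : ℝ} (hc : 0 < c) {bb : ℝ → ℝ}
    (hbG : ∀ y, |bb y| ≤ c * (1 + |y|)) {W Xe : ℝ → ℝ}
    (hε : ε ∈ Set.Ioc (0:ℝ) 1)
    (hMW : ∀ t ∈ Set.Icc (0:ℝ) 1, |W t| ≤ MW)
    (hgc : ContinuousOn (fun s => bb (Xe s)) (Set.Icc 0 1))
    (hX : ∀ t ∈ Set.Icc (0:ℝ) 1, Xe t = x0 + (∫ s in (0:ℝ)..t, bb (Xe s)) + ε * W t) :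
    ∀ t ∈ Set.Icc (0:ℝ) 1, |Xe t| ≤ gronwallBound |x0| c (c*(1+MW)) 1 + MW := by
  have hMW0 : 0 ≤ MW := le_trans (abs_nonneg _) (hMW 0 ⟨le_refl 0, zero_le_one⟩)
  set g : ℝ → ℝ := fun s => bb (Xe s) with hg
  set Y : ℝ → ℝ := fun u => x0 + ∫ s in (0:ℝ)..u, g s with hY
  have hgint : ∀ t ∈ Set.Icc (0:ℝ) 1, IntervalIntegrable g MeasureTheory.volume 0 t := by
    intro t ht
    apply ContinuousOn.intervalIntegrable
    apply hgc.mono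
    rw [Set.uIcc_of_le ht.1]
    exact Set.Icc_subset_Icc le_rfl ht.2
  have hYc : ContinuousOn Y (Set.Icc 0 1) := by
    apply continuousOn_const.add
    have hio : MeasureTheory.IntegrableOn g (Set.uIcc (0:ℝ) 1) MeasureTheory.volume := by
      rw [Set.uIcc_of_le (zero_le_one' ℝ)]
      exact hgc.integrableOn_Icc
    have := continuousOn_primitive_interval (a := (0:ℝ)) (b := (1:ℝ)) hio
    simpa [Set.uIcc_of_le (zero_le_one' ℝ)] using this
  have hYd : ∀ t ∈ Set.Ico (0:ℝ) 1, HasDerivWithinAt Y (g t) (Set.Ici t) t := by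
    intro t ht
    apply HasDerivWithinAt.const_add
    have h1 : 𝓝[Set.Icc t 1] t = 𝓝[Set.Ici t] t := nhdsWithin_Icc_eq_nhdsGE ht.2
    have hmeas : StronglyMeasurableAtFilter g (𝓝[>] t) := by
      refine ⟨Set.Icc t 1, ?_, ?_⟩
      · apply nhdsWithin_mono t Set.Ioi_subset_Ici_self
        rw [← h1]; exact self_mem_nhdsWithin
      · exact (hgc.mono (Set.Icc_subset_Icc ht.1 le_rfl)).aestronglyMeasurable measurableSet_Icc
    have hcont : ContinuousWithinAt g (Set.Ioi t) t := by
      have h2 : ContinuousWithinAt g (Set.Ici t) t := by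
        have := (hgc t ⟨ht.1, ht.2.le⟩).mono (Set.Icc_subset_Icc ht.1 le_rfl)
        unfold ContinuousWithinAt at this ⊢
        rwa [h1] at this
      exact h2.mono Set.Ioi_subset_Ici_self
    exact integral_hasDerivWithinAt_right (hgint t ⟨ht.1, ht.2.le⟩) hmeas hcont
  have hXY : ∀ t ∈ Set.Icc (0:ℝ) 1, Xe t = Y t + ε * W t := fun t ht => hX t ht
  have hbound : ∀ t ∈ Set.Ico (0:ℝ) 1, ‖g t‖ ≤ c * ‖Y t‖ + c * (1 + MW) := by
    intro t ht
    have htm : t ∈ Set.Icc (0:ℝ) 1 := ⟨ht.1, ht.2.le⟩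
    have h2 : |g t| ≤ c * (1 + |Xe t|) := hbG (Xe t)
    have h3 : |Xe t| ≤ |Y t| + MW := by
      rw [hXY t htm]
      refine (abs_add_le _ _).trans ?_
      have : |ε * W t| ≤ MW := by
        rw [abs_mul, abs_of_pos hε.1]
        calc ε * |W t| ≤ 1 * MW := by
              apply mul_le_mul hε.2 (hMW t htm) (abs_nonneg _) zero_le_one
          _ = MW := one_mul _
      linarith
    simp only [Real.norm_eq_abs]
    nlinarith [abs_nonneg (Y t)]
  have hY0 : ‖Y 0‖ ≤ |x0| := by simp [hY]
  have := norm_le_gronwallBound_of_norm_deriv_right_le hYc hYd hY0 hbound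
  intro t ht
  have h4 : ‖Y t‖ ≤ gronwallBound |x0| c (c*(1+MW)) (t - 0) := this t ht
  have h5 : gronwallBound |x0| c (c*(1+MW)) (t - 0) ≤ gronwallBound |x0| c (c*(1+MW)) 1 := by
    rw [gronwallBound_of_K_ne_0 hc.ne', sub_zero]
    have he : Real.exp (c * t) ≤ Real.exp (c * 1) :=
      Real.exp_le_exp.2 (by nlinarith [ht.2])
    have h6 : 0 ≤ c * (1 + MW) / c := by positivity
    nlinarith [abs_nonneg x0]
  have h7 : |Xe t| ≤ |Y t| + MW := by
    rw [hXY t ht]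
    refine (abs_add_le _ _).trans ?_
    have : |ε * W t| ≤ MW := by
      rw [abs_mul, abs_of_pos hε.1]
      calc ε * |W t| ≤ 1 * MW := mul_le_mul hε.2 (hMW t ht) (abs_nonneg _) zero_le_one
        _ = MW := one_mul _
    linarith
  simp only [Real.norm_eq_abs] at h4
  linarith

lemma sde_incr_bound {c x0 CW lam ε M : ℝ} (hc : 0 < c) {bb : ℝ → ℝ} {W Xe : ℝ → ℝ}
    (hM : ∀ t ∈ Set.Icc (0:ℝ) 1, |Xe t| ≤ M)
    (hbG : ∀ y, |bb y| ≤ c * (1 + |y|))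
    (hε : ε ∈ Set.Ioc (0:ℝ) 1)
    (hWH : ∀ s ∈ Set.Icc (0:ℝ) 1, ∀ t ∈ Set.Icc (0:ℝ) 1, |W t - W s| ≤ CW * |t - s| ^ lam)
    (hgc : ContinuousOn (fun s => bb (Xe s)) (Set.Icc 0 1))
    (hX : ∀ t ∈ Set.Icc (0:ℝ) 1, Xe t = x0 + (∫ s in (0:ℝ)..t, bb (Xe s)) + ε * W t) :
    ∀ u ∈ Set.Icc (0:ℝ) 1, ∀ t ∈ Set.Icc (0:ℝ) 1, u ≤ t →
      |Xe t - Xe u| ≤ c * (1 + M) * (t - u) + ε * (CW * (t - u) ^ lam) := by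
  intro u hu t ht hut
  set g : ℝ → ℝ := fun s => bb (Xe s) with hg
  have hgint : ∀ r ∈ Set.Icc (0:ℝ) 1, IntervalIntegrable g MeasureTheory.volume 0 r := by
    intro r hr
    apply ContinuousOn.intervalIntegrable
    apply hgc.mono
    rw [Set.uIcc_of_le hr.1]
    exact Set.Icc_subset_Icc le_rfl hr.2
  have key : Xe t - Xe u = (∫ s in u..t, g s) + ε * (W t - W u) := by
    rw [hX t ht, hX u hu,
      ← integral_interval_sub_left (hgint t ht) (hgint u hu)]
    ring
  rw [key]
  have h1 : |∫ s in u..t, g s| ≤ c * (1 + M) * |t - u| := by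
    rw [← Real.norm_eq_abs]
    apply intervalIntegral.norm_integral_le_of_norm_le_const
    intro x hx
    rw [Set.uIoc_of_le hut] at hx
    have hxm : x ∈ Set.Icc (0:ℝ) 1 := ⟨le_trans hu.1 hx.1.le, le_trans hx.2 ht.2⟩
    have := hbG (Xe x)
    have := hM x hxm
    simp only [Real.norm_eq_abs]
    nlinarith [abs_nonneg (Xe x), hc.le]
  have h2 : |ε * (W t - W u)| ≤ ε * (CW * (t - u) ^ lam) := by
    rw [abs_mul, abs_of_pos hε.1]
    apply mul_le_mul_of_nonneg_left _ hε.1.le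
    have := hWH u hu t ht
    rwa [abs_of_nonneg (by linarith : (0:ℝ) ≤ t - u)] at this
  calc |(∫ s in u..t, g s) + ε * (W t - W u)|
      ≤ |∫ s in u..t, g s| + |ε * (W t - W u)| := abs_add_le _ _
    _ ≤ c * (1 + M) * (t - u) + ε * (CW * (t - u) ^ lam) := by
        rw [abs_of_nonneg (by linarith : (0:ℝ) ≤ t - u)] at h1; linarith

lemma key_bound {c CW lam ε M C0 : ℝ} (N : ℕ) (hc : 0 < c) (hC0 : 0 < C0)
    (hCW : 0 ≤ CW) (hM0 : 0 ≤ M) (hlam : 0 < lam)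
    {bb dbb : ℝ → ℝ} {Xe : ℝ → ℝ}
    (hε : ε ∈ Set.Ioc (0:ℝ) 1)
    (hM : ∀ t ∈ Set.Icc (0:ℝ) 1, |Xe t| ≤ M)
    (hbL : ∀ y z, |bb y - bb z| ≤ c * |y - z|)
    (hdb : ∀ y, |dbb y| ≤ C0 * (1 + |y| ^ N))
    (hincr : ∀ u ∈ Set.Icc (0:ℝ) 1, ∀ t ∈ Set.Icc (0:ℝ) 1, u ≤ t →
      |Xe t - Xe u| ≤ c * (1 + M) * (t - u) + ε * (CW * (t - u) ^ lam))
    (hXc : ContinuousOn Xe (Set.Icc 0 1))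
    (n : ℕ) (hn : 1 ≤ n) :
    |ε⁻¹ * ∑ k ∈ Finset.range n, dbb (Xe ((k : ℝ) / n))
        * ∫ s in ((k : ℝ) / n)..(((k : ℝ) + 1) / n), (bb (Xe s) - bb (Xe ((k : ℝ) / n)))|
      ≤ (C0 * (1 + M ^ N) * c * (c * (1 + M))) * (1 / ((n : ℝ) * ε))
        + (C0 * (1 + M ^ N) * c * CW) * (n : ℝ) ^ (-lam) := by
  have hn0 : (0:ℝ) < n := by exact_mod_cast hn
  set A : ℝ := C0 * (1 + M ^ N) with hA
  have hA0 : 0 ≤ A := by positivity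
  set C : ℝ := c * (c * (1 + M) * (1 / n) + ε * (CW * (1 / n : ℝ) ^ lam)) with hC
  have hC0' : 0 ≤ C := by
    have : (0:ℝ) ≤ ((1:ℝ)/n) ^ lam := Real.rpow_nonneg (by positivity) _
    have h1 : (0:ℝ) ≤ c * (1 + M) * (1 / n) := by positivity
    have h2 : (0:ℝ) ≤ ε * (CW * (1 / n : ℝ) ^ lam) :=
      mul_nonneg hε.1.le (mul_nonneg hCW this)
    nlinarith [hc.le]
  have hbbc : ContinuousOn (fun s => bb (Xe s)) (Set.Icc 0 1) := by
    have hbc : Continuous bb := by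
      apply (LipschitzWith.of_dist_le_mul (K := c.toNNReal) (f := bb) ?_).continuous
      intro y z
      simp only [Real.dist_eq]
      calc |bb y - bb z| ≤ c * |y - z| := hbL y z
        _ ≤ c.toNNReal * |y - z| := by
            apply mul_le_mul_of_nonneg_right _ (abs_nonneg _)
            exact le_max_left _ _
    exact hbc.comp_continuousOn hXc
  -- per-term bound
  have hterm : ∀ k ∈ Finset.range n,
      |dbb (Xe ((k : ℝ) / n))
        * ∫ s in ((k : ℝ) / n)..(((k : ℝ) + 1) / n), (bb (Xe s) - bb (Xe ((k : ℝ) / n)))|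
      ≤ A * (C * (1 / n)) := by
    intro k hk
    rw [Finset.mem_range] at hk
    have hkn : (k : ℝ) + 1 ≤ n := by exact_mod_cast Nat.succ_le_of_lt hk
    set tk : ℝ := (k : ℝ) / n with htk
    set tk1 : ℝ := ((k : ℝ) + 1) / n with htk1
    have htkm : tk ∈ Set.Icc (0:ℝ) 1 := by
      constructor
      · positivity
      · rw [div_le_one hn0]; linarith
    have htk1m : tk1 ∈ Set.Icc (0:ℝ) 1 := by
      constructor
      · positivity
      · rw [div_le_one hn0]; linarith
    have hlt : tk ≤ tk1 := by
      rw [htk, htk1]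
      gcongr
      linarith
    have hdiff : tk1 - tk = 1 / n := by
      rw [htk, htk1]; field_simp; ring
    have hInt : |∫ s in tk..tk1, (bb (Xe s) - bb (Xe tk))| ≤ C * (1 / n) := by
      rw [← hdiff, ← Real.norm_eq_abs]
      have := intervalIntegral.norm_integral_le_of_norm_le_const
        (a := tk) (b := tk1) (C := C) (f := fun s => bb (Xe s) - bb (Xe tk)) ?_
      · calc ‖∫ s in tk..tk1, (bb (Xe s) - bb (Xe tk))‖ ≤ C * |tk1 - tk| := this
          _ = C * (tk1 - tk) := by rw [abs_of_nonneg (by linarith)]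
      · intro x hx
        rw [Set.uIoc_of_le hlt] at hx
        have hxm : x ∈ Set.Icc (0:ℝ) 1 := ⟨le_trans htkm.1 hx.1.le, le_trans hx.2 htk1m.2⟩
        have h1 : |bb (Xe x) - bb (Xe tk)| ≤ c * |Xe x - Xe tk| := hbL _ _
        have h2 : |Xe x - Xe tk| ≤ c * (1 + M) * (x - tk) + ε * (CW * (x - tk) ^ lam) :=
          hincr tk htkm x hxm hx.1.le
        have h3 : x - tk ≤ 1 / n := by
          have h3a := hx.2
          linarith [hdiff]
        have h4 : (x - tk) ^ lam ≤ ((1:ℝ)/n) ^ lam :=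
          Real.rpow_le_rpow (by linarith [hx.1]) h3 hlam.le
        have h5 : c * (1 + M) * (x - tk) ≤ c * (1 + M) * (1 / n) := by
          apply mul_le_mul_of_nonneg_left h3 (by positivity)
        have h6 : ε * (CW * (x - tk) ^ lam) ≤ ε * (CW * ((1:ℝ)/n) ^ lam) := by
          apply mul_le_mul_of_nonneg_left _ hε.1.le
          exact mul_le_mul_of_nonneg_left h4 hCW
        simp only [Real.norm_eq_abs]
        calc |bb (Xe x) - bb (Xe tk)| ≤ c * |Xe x - Xe tk| := h1
          _ ≤ c * (c * (1 + M) * (1 / n) + ε * (CW * ((1:ℝ)/n) ^ lam)) := by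
              apply mul_le_mul_of_nonneg_left _ hc.le
              linarith
          _ = C := by rw [hC]
    have hd : |dbb (Xe tk)| ≤ A := by
      calc |dbb (Xe tk)| ≤ C0 * (1 + |Xe tk| ^ N) := hdb _
        _ ≤ A := by
            rw [hA]
            have : |Xe tk| ^ N ≤ M ^ N := pow_le_pow_left₀ (abs_nonneg _) (hM tk htkm) N
            nlinarith [hC0.le]
    rw [abs_mul]
    exact mul_le_mul hd hInt (abs_nonneg _) hA0
  -- sum bound
  have hsum : |∑ k ∈ Finset.range n, dbb (Xe ((k : ℝ) / n))
        * ∫ s in ((k : ℝ) / n)..(((k : ℝ) + 1) / n), (bb (Xe s) - bb (Xe ((k : ℝ) / n)))|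
      ≤ n * (A * (C * (1 / n))) := by
    calc _ ≤ ∑ k ∈ Finset.range n, |dbb (Xe ((k : ℝ) / n))
        * ∫ s in ((k : ℝ) / n)..(((k : ℝ) + 1) / n), (bb (Xe s) - bb (Xe ((k : ℝ) / n)))| :=
          Finset.abs_sum_le_sum_abs _ _
      _ ≤ ∑ _k ∈ Finset.range n, A * (C * (1 / n)) := Finset.sum_le_sum hterm
      _ = n * (A * (C * (1 / n))) := by
          rw [Finset.sum_const, Finset.card_range, nsmul_eq_mul]
  rw [abs_mul, abs_of_nonneg (inv_nonneg.2 hε.1.le)]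
  have hnne : (n:ℝ) ≠ 0 := hn0.ne'
  have hεne : ε ≠ 0 := hε.1.ne'
  have hfin : ε⁻¹ * (n * (A * (C * (1 / n))))
      = (A * c * (c * (1 + M))) * (1 / ((n : ℝ) * ε)) + (A * c * CW) * ((1:ℝ)/n) ^ lam := by
    rw [hC]
    set u : ℝ := ((1:ℝ)/n) ^ lam with hu
    field_simp
  have hle : ε⁻¹ * |∑ k ∈ Finset.range n, dbb (Xe ((k : ℝ) / n))
        * ∫ s in ((k : ℝ) / n)..(((k : ℝ) + 1) / n), (bb (Xe s) - bb (Xe ((k : ℝ) / n)))|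
      ≤ ε⁻¹ * (n * (A * (C * (1 / n)))) :=
    mul_le_mul_of_nonneg_left hsum (inv_nonneg.2 hε.1.le)
  rw [hfin] at hle
  have hrp : ((1:ℝ)/n) ^ lam = (n : ℝ) ^ (-lam) := by
    rw [one_div, Real.inv_rpow hn0.le, ← Real.rpow_neg hn0.le]
  rw [hrp] at hle
  exact hle


/-- Vanishing of the drift correction term in the score:
`|H^{(1)}_{n,ε}| ≤ C'(1/(nε) + n^{-λ})`, hence it tends to `0` when `nε → ∞`. -/
theorem score_drift_term_vanishes {Θ : Type*} (H lam c x0 C0 : ℝ) (N : ℕ)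
    (hH : H ∈ Set.Ioo (0:ℝ) 1) (hlam : lam ∈ Set.Ioo (0:ℝ) H) (hc : 0 < c) (hC0 : 0 < C0)
    (b dbi : ℝ → Θ → ℝ) (W : ℝ → ℝ) (X : ℝ → ℝ → ℝ) (θ0 : Θ) (CW MW : ℝ)
    (hbL : ∀ (θ : Θ) (y z : ℝ), |b y θ - b z θ| ≤ c * |y - z|)
    (hbG : ∀ (θ : Θ) (y : ℝ), |b y θ| ≤ c * (1 + |y|))
    (hdb : ∀ (θ : Θ) (y : ℝ), |dbi y θ| ≤ C0 * (1 + |y| ^ N))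
    (hWH : ∀ s ∈ Set.Icc (0:ℝ) 1, ∀ t ∈ Set.Icc (0:ℝ) 1, |W t - W s| ≤ CW * |t - s| ^ lam)
    (hMW : ∀ t ∈ Set.Icc (0:ℝ) 1, |W t| ≤ MW)
    (hXc : ∀ ε, ContinuousOn (X ε) (Set.Icc 0 1))
    (hX : ∀ ε ∈ Set.Ioc (0:ℝ) 1, ∀ t ∈ Set.Icc (0:ℝ) 1,
      X ε t = x0 + (∫ s in (0:ℝ)..t, b (X ε s) θ0) + ε * W t) :
    ∃ C' > (0:ℝ),
      (∀ n : ℕ, 1 ≤ n → ∀ ε ∈ Set.Ioc (0:ℝ) 1,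
        |ε⁻¹ * ∑ k ∈ Finset.range n, dbi (X ε ((k : ℝ) / n)) θ0
            * ∫ s in ((k : ℝ) / n)..(((k : ℝ) + 1) / n),
                (b (X ε s) θ0 - b (X ε ((k : ℝ) / n)) θ0)|
          ≤ C' * (1 / ((n : ℝ) * ε) + (n : ℝ) ^ (-lam))) ∧
      ∀ (ns : ℕ → ℕ) (es : ℕ → ℝ), Tendsto ns atTop atTop →
        Tendsto es atTop (nhdsWithin 0 (Set.Ioi 0)) → (∀ j, es j ∈ Set.Ioc (0:ℝ) 1) →
        Tendsto (fun j => (ns j : ℝ) * es j) atTop atTop →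
        Tendsto (fun j => (es j)⁻¹ * ∑ k ∈ Finset.range (ns j),
            dbi (X (es j) ((k : ℝ) / ns j)) θ0
              * ∫ s in ((k : ℝ) / ns j)..(((k : ℝ) + 1) / ns j),
                  (b (X (es j) s) θ0 - b (X (es j) ((k : ℝ) / ns j)) θ0))
          atTop (nhds 0) := by
  have hMW0 : 0 ≤ MW := le_trans (abs_nonneg _) (hMW 0 ⟨le_refl 0, zero_le_one⟩)
  have hCW : 0 ≤ CW := by
    have h := hWH 0 ⟨le_refl 0, zero_le_one⟩ 1 ⟨zero_le_one, le_refl 1⟩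
    have : |(1:ℝ) - 0| ^ lam = 1 := by
      rw [sub_zero, abs_one, Real.one_rpow]
    rw [this, mul_one] at h
    exact le_trans (abs_nonneg _) h
  set M : ℝ := gronwallBound |x0| c (c * (1 + MW)) 1 + MW with hMdef
  have hM0 : 0 ≤ M := by
    rw [hMdef, gronwallBound_of_K_ne_0 hc.ne']
    have h1 : (1:ℝ) ≤ Real.exp (c * 1) := Real.one_le_exp (by positivity)
    have h2 : (0:ℝ) ≤ c * (1 + MW) / c := by positivity
    nlinarith [abs_nonneg x0]
  -- continuity of drift composed with solution
  have hbc : Continuous (fun y => b y θ0) := by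
    apply (LipschitzWith.of_dist_le_mul (K := c.toNNReal) (f := fun y => b y θ0) ?_).continuous
    intro y z
    simp only [Real.dist_eq]
    calc |b y θ0 - b z θ0| ≤ c * |y - z| := hbL θ0 y z
      _ ≤ c.toNNReal * |y - z| :=
          mul_le_mul_of_nonneg_right (le_max_left _ _) (abs_nonneg _)
  have hMb : ∀ ε ∈ Set.Ioc (0:ℝ) 1, ∀ t ∈ Set.Icc (0:ℝ) 1, |X ε t| ≤ M := by
    intro ε hε
    exact sde_sup_bound hc (hbG θ0) hε hMW (hbc.comp_continuousOn (hXc ε)) (hX ε hε)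
  have hincr : ∀ ε ∈ Set.Ioc (0:ℝ) 1, ∀ u ∈ Set.Icc (0:ℝ) 1, ∀ t ∈ Set.Icc (0:ℝ) 1, u ≤ t →
      |X ε t - X ε u| ≤ c * (1 + M) * (t - u) + ε * (CW * (t - u) ^ lam) := by
    intro ε hε
    exact sde_incr_bound hc (hMb ε hε) (hbG θ0) hε hWH
      (hbc.comp_continuousOn (hXc ε)) (hX ε hε)
  set K1 : ℝ := C0 * (1 + M ^ N) * c * (c * (1 + M)) with hK1
  set K2 : ℝ := C0 * (1 + M ^ N) * c * CW with hK2
  have hK10 : 0 ≤ K1 := by rw [hK1]; positivity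
  have hK20 : 0 ≤ K2 := mul_nonneg (by positivity) hCW
  refine ⟨K1 + K2 + 1, by linarith, ?_, ?_⟩
  · intro n hn ε hε
    have key := key_bound N hc hC0 hCW hM0 hlam.1 hε (hMb ε hε) (hbL θ0) (hdb θ0)
      (hincr ε hε) (hXc ε) n hn
    have hx : (0:ℝ) ≤ 1 / ((n : ℝ) * ε) :=
      div_nonneg zero_le_one (mul_nonneg (Nat.cast_nonneg n) hε.1.le)
    have hy : (0:ℝ) ≤ (n : ℝ) ^ (-lam) := Real.rpow_nonneg (Nat.cast_nonneg n) _
    calc _ ≤ K1 * (1 / ((n : ℝ) * ε)) + K2 * (n : ℝ) ^ (-lam) := key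
      _ ≤ (K1 + K2 + 1) * (1 / ((n : ℝ) * ε) + (n : ℝ) ^ (-lam)) := by nlinarith
  · intro ns es hns hes hesIoc hne
    apply squeeze_zero_norm'
      (a := fun j => (K1 + K2 + 1) * (1 / ((ns j : ℝ) * es j) + (ns j : ℝ) ^ (-lam)))
    · filter_upwards [hns.eventually_ge_atTop 1] with j hj
      rw [Real.norm_eq_abs]
      have key := key_bound N hc hC0 hCW hM0 hlam.1 (hesIoc j) (hMb _ (hesIoc j)) (hbL θ0)
        (hdb θ0) (hincr _ (hesIoc j)) (hXc _) (ns j) hj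
      have hx : (0:ℝ) ≤ 1 / ((ns j : ℝ) * es j) :=
        div_nonneg zero_le_one (mul_nonneg (Nat.cast_nonneg _) (hesIoc j).1.le)
      have hy : (0:ℝ) ≤ (ns j : ℝ) ^ (-lam) := Real.rpow_nonneg (Nat.cast_nonneg _) _
      calc _ ≤ K1 * (1 / ((ns j : ℝ) * es j)) + K2 * (ns j : ℝ) ^ (-lam) := key
        _ ≤ (K1 + K2 + 1) * (1 / ((ns j : ℝ) * es j) + (ns j : ℝ) ^ (-lam)) := by nlinarith
    · have h1 : Tendsto (fun j => 1 / ((ns j : ℝ) * es j)) atTop (𝓝 0) := by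
        simp only [one_div]
        exact hne.inv_tendsto_atTop
      have h2 : Tendsto (fun j => (ns j : ℝ) ^ (-lam)) atTop (𝓝 0) :=
        (tendsto_rpow_neg_atTop hlam.1).comp (tendsto_natCast_atTop_atTop.comp hns)
      have := (h1.add h2).const_mul (K1 + K2 + 1)
      simpa using this
end
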